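/- arXiv:2209.12198 — 3 statements merged into one kernel-verified Lean document; each statement's English description precedes it below -/
import Mathlib

section
/- Let 0 < θ < 1 and ν > 0. There exists a constant C₀ > 0, independent of b, such that for every real b ≥ 2: ∫₁^{b} u^{-2θ} / (1 + (b^{1−θ} − u^{1−θ})^{ν}) du ≤ C₀·b^{ω}·log(b) if (ν,θ) ∈ Ω, and ∫₁^{b} u^{-2θ} / (1 + (b^{1−θ} − u^{1−θ})^{ν}) du ≤ C₀·b^{ω} if (ν,θ) ∉ Ω. -/
open Real MeasureTheory
open intervalIntegral

/-- The rate exponent `ω(ν,θ)` of Lemma 4: `ω = 1-2θ-ν+νθ` when `ν ≤ 1` and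
`θ ≤ 1/2`; `ω = -θ` when `ν ≥ 1` and `θ ≤ ν/(ν+1)`; `ω = -ν(1-θ)` when
`θ ≥ 1/2` and `θ ≥ ν/(ν+1)` (the formulas agree on overlaps). -/
noncomputable def rateExp (ν θ : ℝ) : ℝ :=
  if ν ≤ 1 ∧ θ ≤ 1 / 2 then 1 - 2 * θ - ν + ν * θ
  else if 1 ≤ ν ∧ θ ≤ ν / (ν + 1) then -θ
  else -ν * (1 - θ)

/-- The exceptional set `Ω = {(ν,θ) : 0 < ν ≤ 1, θ = 1/2} ∪ {(ν,θ) : ν = 1, 0 < θ ≤ 1/2}`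
on which a logarithmic factor appears. -/
def logSet : Set (ℝ × ℝ) :=
  {p | (0 < p.1 ∧ p.1 ≤ 1 ∧ p.2 = 1 / 2) ∨ (p.1 = 1 ∧ 0 < p.2 ∧ p.2 ≤ 1 / 2)}

-- log absorption
lemma log_absorb {b δ : ℝ} (hb : 1 ≤ b) (hδ : 0 < δ) : Real.log b ≤ δ⁻¹ * b ^ δ := by
  have hb0 : 0 < b := lt_of_lt_of_le one_pos hb
  have h1 : δ * Real.log b = Real.log (b ^ δ) := (Real.log_rpow hb0 δ).symm
  have h2 : Real.log (b ^ δ) ≤ b ^ δ - 1 := Real.log_le_sub_one_of_pos (Real.rpow_pos_of_pos hb0 δ)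
  have h3 : δ * Real.log b ≤ b ^ δ := by nlinarith [Real.rpow_pos_of_pos hb0 δ]
  calc Real.log b = δ⁻¹ * (δ * Real.log b) := by field_simp
    _ ≤ δ⁻¹ * b ^ δ := mul_le_mul_of_nonneg_left h3 (le_of_lt (inv_pos.mpr hδ))

-- continuity of inner integrand of J
lemma contJ {c ν : ℝ} (hν : 0 < ν) (hc : 0 ≤ c) {s : Set ℝ} (hs : s ⊆ Set.Ici 0) :
    ContinuousOn (fun t : ℝ => (1 + (c * t) ^ ν)⁻¹) s := by
  apply ContinuousOn.inv₀
  · exact (continuousOn_const.add (((continuousOn_const.mul continuousOn_id).rpow_const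
      (fun x hx => Or.inr hν.le))))
  · intro x hx
    have h0 : 0 ≤ c * x := mul_nonneg hc (hs hx)
    have : 0 ≤ (c * x) ^ ν := Real.rpow_nonneg h0 ν
    positivity

-- split bound for J when L is large
lemma J_split {c L ν : ℝ} (hc : 0 < c) (hν : 0 < ν) (hL : c⁻¹ ≤ L) :
    (∫ s in (0:ℝ)..L, (1 + (c * s) ^ ν)⁻¹) ≤
      c⁻¹ + c ^ (-ν) * ∫ s in c⁻¹..L, s ^ (-ν) := by
  have hs0 : (0:ℝ) < c⁻¹ := inv_pos.mpr hc
  have hL0 : (0:ℝ) ≤ L := le_trans hs0.le hL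
  have hI1 : IntervalIntegrable (fun s : ℝ => (1 + (c * s) ^ ν)⁻¹) volume 0 c⁻¹ := by
    apply (contJ hν hc.le _).intervalIntegrable
    rw [Set.uIcc_of_le hs0.le]
    exact fun x hx => hx.1
  have hI2 : IntervalIntegrable (fun s : ℝ => (1 + (c * s) ^ ν)⁻¹) volume c⁻¹ L := by
    apply (contJ hν hc.le _).intervalIntegrable
    rw [Set.uIcc_of_le hL]
    exact fun x hx => le_trans hs0.le hx.1
  have hsplit : (∫ s in (0:ℝ)..L, (1 + (c * s) ^ ν)⁻¹) =
      (∫ s in (0:ℝ)..c⁻¹, (1 + (c * s) ^ ν)⁻¹) + ∫ s in c⁻¹..L, (1 + (c * s) ^ ν)⁻¹ :=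
    (integral_add_adjacent_intervals hI1 hI2).symm
  rw [hsplit]
  have hb1 : (∫ s in (0:ℝ)..c⁻¹, (1 + (c * s) ^ ν)⁻¹) ≤ c⁻¹ := by
    have : (∫ s in (0:ℝ)..c⁻¹, (1 + (c * s) ^ ν)⁻¹) ≤ ∫ _ in (0:ℝ)..c⁻¹, (1:ℝ) := by
      apply integral_mono_on hs0.le hI1 intervalIntegrable_const
      intro x hx
      have h0 : 0 ≤ (c * x) ^ ν := Real.rpow_nonneg (mul_nonneg hc.le hx.1) ν
      rw [inv_le_one_iff₀]
      right; linarith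
    simpa using this
  have hb2 : (∫ s in c⁻¹..L, (1 + (c * s) ^ ν)⁻¹) ≤ c ^ (-ν) * ∫ s in c⁻¹..L, s ^ (-ν) := by
    rw [← intervalIntegral.integral_const_mul]
    apply integral_mono_on hL hI2
    · apply ContinuousOn.intervalIntegrable
      apply ContinuousOn.mul continuousOn_const
      apply ContinuousOn.rpow_const continuousOn_id
      intro x hx
      rw [Set.uIcc_of_le hL] at hx
      exact Or.inl (ne_of_gt (lt_of_lt_of_le hs0 hx.1))
    · intro x hx
      have hx0 : 0 < x := lt_of_lt_of_le hs0 hx.1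
      have hcx : 0 < c * x := mul_pos hc hx0
      have h1 : (0:ℝ) < (c * x) ^ ν := Real.rpow_pos_of_pos hcx ν
      have h2 : (1 + (c * x) ^ ν)⁻¹ ≤ ((c * x) ^ ν)⁻¹ := by
        apply inv_anti₀ h1; linarith
      calc (1 + (c * x) ^ ν)⁻¹ ≤ ((c * x) ^ ν)⁻¹ := h2
        _ = (c * x) ^ (-ν) := (Real.rpow_neg hcx.le ν).symm
        _ = c ^ (-ν) * x ^ (-ν) := Real.mul_rpow hc.le hx0.le
  linarith

lemma J_small {c L ν : ℝ} (hc : 0 < c) (hν : 0 < ν) (hL0 : 0 ≤ L) (hL : L ≤ c⁻¹) :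
    (∫ s in (0:ℝ)..L, (1 + (c * s) ^ ν)⁻¹) ≤ c⁻¹ := by
  have hI1 : IntervalIntegrable (fun s : ℝ => (1 + (c * s) ^ ν)⁻¹) volume 0 L := by
    apply (contJ hν hc.le _).intervalIntegrable
    rw [Set.uIcc_of_le hL0]
    exact fun x hx => hx.1
  have : (∫ s in (0:ℝ)..L, (1 + (c * s) ^ ν)⁻¹) ≤ ∫ _ in (0:ℝ)..L, (1:ℝ) := by
    apply integral_mono_on hL0 hI1 intervalIntegrable_const
    intro x hx
    have h0 : 0 ≤ (c * x) ^ ν := Real.rpow_nonneg (mul_nonneg hc.le hx.1) ν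
    rw [inv_le_one_iff₀]; right; linarith
  simpa using le_trans this (by simpa using hL)

lemma J_gt {c L ν : ℝ} (hc : 0 < c) (hν : 1 < ν) (hL0 : 0 ≤ L) :
    (∫ s in (0:ℝ)..L, (1 + (c * s) ^ ν)⁻¹) ≤ c⁻¹ + c⁻¹ / (ν - 1) := by
  have hν0 : 0 < ν := lt_trans one_pos hν
  have hs0 : (0:ℝ) < c⁻¹ := inv_pos.mpr hc
  have hpos : 0 ≤ c⁻¹ / (ν - 1) := div_nonneg hs0.le (by linarith)
  rcases le_or_gt L c⁻¹ with h | h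
  · linarith [J_small hc hν0 hL0 h]
  · have hL : c⁻¹ ≤ L := h.le
    have hmain := J_split hc hν0 hL
    have htail : c ^ (-ν) * (∫ s in c⁻¹..L, s ^ (-ν)) ≤ c⁻¹ / (ν - 1) := by
      have hrw : (∫ s in c⁻¹..L, s ^ (-ν)) = (L ^ (-ν + 1) - (c⁻¹) ^ (-ν + 1)) / (-ν + 1) := by
        apply integral_rpow
        right
        constructor
        · intro hcon; linarith [hcon]
        · rw [Set.uIcc_of_le hL]
          intro hcon; linarith [hcon.1]
      have hLpow : (0:ℝ) ≤ L ^ (-ν + 1) := Real.rpow_nonneg (le_trans hs0.le hL) _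
      have hcpow : (0:ℝ) < (c⁻¹) ^ (-ν + 1) := Real.rpow_pos_of_pos hs0 _
      have h2 : (∫ s in c⁻¹..L, s ^ (-ν)) ≤ (c⁻¹) ^ (-ν + 1) / (ν - 1) := by
        rw [hrw, show (L ^ (-ν + 1) - c⁻¹ ^ (-ν + 1)) / (-ν + 1)
            = (c⁻¹ ^ (-ν + 1) - L ^ (-ν + 1)) / (ν - 1) by
          rw [div_eq_div_iff (by linarith) (by linarith)]; ring]
        gcongr <;> linarith
      have hcν : (0:ℝ) < c ^ (-ν) := Real.rpow_pos_of_pos hc _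
      have h3 : c ^ (-ν) * (c⁻¹) ^ (-ν + 1) = c⁻¹ := by
        rw [Real.inv_rpow hc.le, ← Real.rpow_neg hc.le, ← Real.rpow_add hc,
          show (-ν + -(-ν + 1)) = (-1:ℝ) by ring, Real.rpow_neg_one]
      calc c ^ (-ν) * (∫ s in c⁻¹..L, s ^ (-ν)) ≤ c ^ (-ν) * ((c⁻¹) ^ (-ν + 1) / (ν - 1)) :=
            mul_le_mul_of_nonneg_left h2 hcν.le
        _ = c ^ (-ν) * (c⁻¹) ^ (-ν + 1) / (ν - 1) := by ring
        _ = c⁻¹ / (ν - 1) := by rw [h3]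
    linarith

lemma J_eq {c L : ℝ} (hc : 0 < c) (hL0 : 0 ≤ L) :
    (∫ s in (0:ℝ)..L, (1 + (c * s) ^ (1:ℝ))⁻¹) ≤ c⁻¹ * (1 + Real.log (max 1 (c * L))) := by
  have hs0 : (0:ℝ) < c⁻¹ := inv_pos.mpr hc
  have hlog0 : 0 ≤ Real.log (max 1 (c * L)) := Real.log_nonneg (le_max_left _ _)
  rcases le_or_gt L c⁻¹ with h | h
  · have := J_small hc one_pos hL0 h
    nlinarith
  · have hL : c⁻¹ ≤ L := h.le
    have hmain := J_split hc one_pos hL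
    have hrw : (∫ s in c⁻¹..L, s ^ (-(1:ℝ))) = Real.log (c * L) := by
      have : ∀ s : ℝ, s ^ (-(1:ℝ)) = s⁻¹ := fun s => Real.rpow_neg_one s
      rw [show (fun s : ℝ => s ^ (-(1:ℝ))) = fun s : ℝ => s⁻¹ from funext this]
      rw [integral_inv]
      · rw [show L / c⁻¹ = c * L by field_simp]
      · rw [Set.uIcc_of_le hL]
        intro hcon; linarith [hcon.1]
    have hc1 : c ^ (-(1:ℝ)) = c⁻¹ := Real.rpow_neg_one c
    have hmax : max 1 (c * L) = c * L := by
      apply max_eq_right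
      rw [← mul_le_mul_iff_right₀ hc] at hL
      simpa [mul_inv_cancel₀ (ne_of_gt hc)] using hL
    calc (∫ s in (0:ℝ)..L, (1 + (c * s) ^ (1:ℝ))⁻¹)
        ≤ c⁻¹ + c ^ (-(1:ℝ)) * ∫ s in c⁻¹..L, s ^ (-(1:ℝ)) := hmain
      _ = c⁻¹ + c⁻¹ * Real.log (max 1 (c * L)) := by rw [hrw, hc1, hmax]
      _ = c⁻¹ * (1 + Real.log (max 1 (c * L))) := by ring

lemma J_lt {c L ν : ℝ} (hc : 0 < c) (hν : 0 < ν) (hν1 : ν < 1) (hL0 : 0 ≤ L) :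
    (∫ s in (0:ℝ)..L, (1 + (c * s) ^ ν)⁻¹) ≤ c⁻¹ + c ^ (-ν) * L ^ (1 - ν) / (1 - ν) := by
  have hs0 : (0:ℝ) < c⁻¹ := inv_pos.mpr hc
  have hcν : (0:ℝ) < c ^ (-ν) := Real.rpow_pos_of_pos hc _
  have hLpow : (0:ℝ) ≤ L ^ (1 - ν) := Real.rpow_nonneg hL0 _
  have hextra : 0 ≤ c ^ (-ν) * L ^ (1 - ν) / (1 - ν) :=
    div_nonneg (by positivity) (by linarith)
  rcases le_or_gt L c⁻¹ with h | h
  · linarith [J_small hc hν hL0 h]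
  · have hL : c⁻¹ ≤ L := h.le
    have hmain := J_split hc hν hL
    have hrw : (∫ s in c⁻¹..L, s ^ (-ν)) = (L ^ (-ν + 1) - (c⁻¹) ^ (-ν + 1)) / (-ν + 1) := by
      apply integral_rpow
      left; linarith
    have hcpow : (0:ℝ) ≤ (c⁻¹) ^ (-ν + 1) := Real.rpow_nonneg hs0.le _
    have hcpow' : (0:ℝ) ≤ (c⁻¹) ^ (1 - ν) := Real.rpow_nonneg hs0.le _
    have h2 : (∫ s in c⁻¹..L, s ^ (-ν)) ≤ L ^ (1 - ν) / (1 - ν) := by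
      rw [hrw, show (-ν + 1 : ℝ) = 1 - ν by ring]
      gcongr <;> linarith
    have := mul_le_mul_of_nonneg_left h2 hcν.le
    calc (∫ s in (0:ℝ)..L, (1 + (c * s) ^ ν)⁻¹)
        ≤ c⁻¹ + c ^ (-ν) * ∫ s in c⁻¹..L, s ^ (-ν) := hmain
      _ ≤ c⁻¹ + c ^ (-ν) * (L ^ (1 - ν) / (1 - ν)) := by linarith
      _ = c⁻¹ + c ^ (-ν) * L ^ (1 - ν) / (1 - ν) := by ring

lemma P_lt {θ b : ℝ} (hθ2 : θ < 1/2) (hb : 1 ≤ b) :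
    (∫ u in (1:ℝ)..b, u ^ (-(2*θ))) ≤ b ^ (1-2*θ) / (1-2*θ) := by
  rw [integral_rpow (Or.inl (by linarith))]
  have h1 : (-(2*θ) + 1 : ℝ) = 1 - 2*θ := by ring
  rw [h1, Real.one_rpow]
  have hbp : (0:ℝ) ≤ b ^ (1-2*θ) := Real.rpow_nonneg (by linarith) _
  gcongr <;> linarith

lemma P_gt {θ b : ℝ} (hθ2 : 1/2 < θ) (hb : 1 ≤ b) :
    (∫ u in (1:ℝ)..b, u ^ (-(2*θ))) ≤ 1 / (2*θ - 1) := by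
  rw [integral_rpow (Or.inr ⟨by intro h; rw [neg_eq_iff_eq_neg] at h; norm_num at h; linarith,
      by rw [Set.uIcc_of_le hb]; intro hcon; linarith [hcon.1]⟩)]
  have h1 : (-(2*θ) + 1 : ℝ) = -(2*θ - 1) := by ring
  rw [h1, Real.one_rpow]
  have hbp : (0:ℝ) ≤ b ^ (-(2*θ-1)) := Real.rpow_nonneg (by linarith) _
  have hd : (2*θ-1) > 0 := by linarith
  rw [show (b ^ (-(2*θ-1)) - 1) / (-(2*θ-1)) = (1 - b ^ (-(2*θ-1))) / (2*θ-1) by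
    set X := b ^ (-(2*θ-1))
    rw [div_eq_div_iff (by linarith : -(2*θ-1) ≠ 0) (ne_of_gt hd)]; ring]
  gcongr
  linarith

lemma P_eq {b : ℝ} (hb : 1 ≤ b) :
    (∫ u in (1:ℝ)..b, u ^ (-(1:ℝ))) = Real.log b := by
  have : ∀ s : ℝ, s ^ (-(1:ℝ)) = s⁻¹ := fun s => Real.rpow_neg_one s
  rw [show (fun s : ℝ => s ^ (-(1:ℝ))) = fun s : ℝ => s⁻¹ from funext this]
  rw [integral_inv (by rw [Set.uIcc_of_le hb]; intro hcon; linarith [hcon.1])]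
  rw [div_one]

lemma master {θ ν b : ℝ} (hθ : 0 < θ) (hθ1 : θ < 1) (hν : 0 < ν) (hb : 2 ≤ b) :
    (∫ u in Set.Icc (1:ℝ) b, u ^ (-(2*θ)) / (1 + (b ^ (1-θ) - u ^ (1-θ)) ^ ν))
      ≤ (1 - 2 ^ (θ-1) : ℝ) ^ (-ν) * b ^ (-(ν*(1-θ))) * (∫ u in (1:ℝ)..b, u ^ (-(2*θ)))
        + 2 ^ (2*θ) * b ^ (-(2*θ)) *
          (∫ s in (0:ℝ)..b/2, (1 + ((1-θ) * b ^ (-θ) * s) ^ ν)⁻¹) := by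
  have hb0 : (0:ℝ) < b := by linarith
  have hb1 : (1:ℝ) ≤ b := by linarith
  have h1b2 : (1:ℝ) ≤ b/2 := by linarith
  have hb2b : b/2 ≤ b := by linarith
  set f : ℝ → ℝ := fun u => u ^ (-(2*θ)) / (1 + (b ^ (1-θ) - u ^ (1-θ)) ^ ν) with hf
  -- positivity facts about the denominator
  have hden : ∀ u ∈ Set.Icc (1:ℝ) b, 0 ≤ (b ^ (1-θ) - u ^ (1-θ)) ^ ν ∧
      (0:ℝ) < 1 + (b ^ (1-θ) - u ^ (1-θ)) ^ ν := by
    intro u hu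
    have hu0 : (0:ℝ) ≤ u := le_trans zero_le_one hu.1
    have hle : u ^ (1-θ) ≤ b ^ (1-θ) := Real.rpow_le_rpow hu0 hu.2 (by linarith)
    have h0 : 0 ≤ (b ^ (1-θ) - u ^ (1-θ)) ^ ν := Real.rpow_nonneg (by linarith) ν
    exact ⟨h0, by linarith⟩
  -- continuity of f on [1, b]
  have hcont : ContinuousOn f (Set.Icc (1:ℝ) b) := by
    apply ContinuousOn.div
    · exact continuousOn_id.rpow_const fun x hx => Or.inl (by
        simp only [id_eq]; exact ne_of_gt (by linarith [hx.1]))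
    · apply continuousOn_const.add
      apply ContinuousOn.rpow_const
      · exact continuousOn_const.sub (continuousOn_id.rpow_const
          fun x hx => Or.inr (by linarith))
      · exact fun x hx => Or.inr hν.le
    · exact fun x hx => ne_of_gt (hden x hx).2
  have hInt1 : IntervalIntegrable f volume 1 (b/2) := by
    apply ContinuousOn.intervalIntegrable
    apply hcont.mono
    rw [Set.uIcc_of_le h1b2]
    exact Set.Icc_subset_Icc le_rfl hb2b
  have hInt2 : IntervalIntegrable f volume (b/2) b := by
    apply ContinuousOn.intervalIntegrable
    apply hcont.mono
    rw [Set.uIcc_of_le hb2b]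
    exact Set.Icc_subset_Icc h1b2 le_rfl
  -- convert set integral to interval integral and split
  have hconv : (∫ u in Set.Icc (1:ℝ) b, f u) = (∫ u in (1:ℝ)..(b/2), f u) + ∫ u in (b/2)..b, f u := by
    rw [MeasureTheory.integral_Icc_eq_integral_Ioc,
      ← intervalIntegral.integral_of_le hb1,
      ← integral_add_adjacent_intervals hInt1 hInt2]
  rw [hconv]
  -- the power function u ↦ u^(-2θ) is integrable
  have hcontP : ContinuousOn (fun u : ℝ => u ^ (-(2*θ))) (Set.Icc (1:ℝ) b) :=
    continuousOn_id.rpow_const fun x hx => Or.inl (by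
      simp only [id_eq]; exact ne_of_gt (by linarith [hx.1]))
  have hIntP1 : IntervalIntegrable (fun u : ℝ => u ^ (-(2*θ))) volume 1 (b/2) := by
    apply ContinuousOn.intervalIntegrable
    apply hcontP.mono
    rw [Set.uIcc_of_le h1b2]
    exact Set.Icc_subset_Icc le_rfl hb2b
  have hIntP2 : IntervalIntegrable (fun u : ℝ => u ^ (-(2*θ))) volume (b/2) b := by
    apply ContinuousOn.intervalIntegrable
    apply hcontP.mono
    rw [Set.uIcc_of_le hb2b]
    exact Set.Icc_subset_Icc h1b2 le_rfl
  -- constants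
  set cθ : ℝ := 1 - 2 ^ (θ-1 : ℝ) with hcθ
  have hc2 : (2:ℝ) ^ (θ-1 : ℝ) < 1 := Real.rpow_lt_one_of_one_lt_of_neg one_lt_two (by linarith)
  have hcθ0 : 0 < cθ := by simp only [hcθ]; linarith
  have hKA : (0:ℝ) < cθ ^ (-ν) * b ^ (-(ν*(1-θ))) :=
    mul_pos (Real.rpow_pos_of_pos hcθ0 _) (Real.rpow_pos_of_pos hb0 _)
  -- Part A : on [1, b/2]
  have hA : (∫ u in (1:ℝ)..(b/2), f u)
      ≤ cθ ^ (-ν) * b ^ (-(ν*(1-θ))) * ∫ u in (1:ℝ)..b, u ^ (-(2*θ)) := by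
    have hptA : ∀ u ∈ Set.Icc (1:ℝ) (b/2),
        f u ≤ cθ ^ (-ν) * b ^ (-(ν*(1-θ))) * u ^ (-(2*θ)) := by
      intro u hu
      have hu0 : (0:ℝ) ≤ u := le_trans zero_le_one hu.1
      have hub : u ∈ Set.Icc (1:ℝ) b := ⟨hu.1, le_trans hu.2 hb2b⟩
      have hbig : cθ * b ^ (1-θ) ≤ b ^ (1-θ) - u ^ (1-θ) := by
        have h1 : u ^ (1-θ) ≤ (b/2) ^ (1-θ) := Real.rpow_le_rpow hu0 hu.2 (by linarith)
        have h2 : ((b:ℝ)/2) ^ (1-θ : ℝ) = b ^ (1-θ) * 2 ^ (θ-1 : ℝ) := by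
          rw [Real.div_rpow hb0.le (by norm_num : (0:ℝ) ≤ 2),
            show (θ - 1 : ℝ) = -(1-θ) by ring, Real.rpow_neg (by norm_num : (0:ℝ) ≤ 2),
            div_eq_mul_inv]
        have hbp : (0:ℝ) < b ^ (1-θ) := Real.rpow_pos_of_pos hb0 _
        rw [h2] at h1
        simp only [hcθ]
        nlinarith
      have hEpos : (0:ℝ) < (cθ * b ^ (1-θ)) ^ ν :=
        Real.rpow_pos_of_pos (mul_pos hcθ0 (Real.rpow_pos_of_pos hb0 _)) _
      have hD : (cθ * b ^ (1-θ)) ^ ν ≤ 1 + (b ^ (1-θ) - u ^ (1-θ)) ^ ν := by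
        have := Real.rpow_le_rpow (le_of_lt (mul_pos hcθ0 (Real.rpow_pos_of_pos hb0 _)))
          hbig hν.le
        linarith
      have hXpos : (0:ℝ) ≤ u ^ (-(2*θ)) := Real.rpow_nonneg hu0 _
      have hstep : f u ≤ u ^ (-(2*θ)) / (cθ * b ^ (1-θ)) ^ ν :=
        div_le_div_of_nonneg_left hXpos hEpos hD
      have hrwE : ((cθ * b ^ (1-θ)) ^ ν)⁻¹ = cθ ^ (-ν) * b ^ (-(ν*(1-θ))) := by
        rw [Real.mul_rpow hcθ0.le (Real.rpow_nonneg hb0.le _),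
          ← Real.rpow_mul hb0.le, mul_inv,
          ← Real.rpow_neg hcθ0.le, ← Real.rpow_neg hb0.le,
          show (-((1-θ)*ν) : ℝ) = -(ν*(1-θ)) by ring]
      calc f u ≤ u ^ (-(2*θ)) / (cθ * b ^ (1-θ)) ^ ν := hstep
        _ = u ^ (-(2*θ)) * ((cθ * b ^ (1-θ)) ^ ν)⁻¹ := div_eq_mul_inv _ _
        _ = cθ ^ (-ν) * b ^ (-(ν*(1-θ))) * u ^ (-(2*θ)) := by rw [hrwE]; ring
    have h1 : (∫ u in (1:ℝ)..(b/2), f u)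
        ≤ ∫ u in (1:ℝ)..(b/2), cθ ^ (-ν) * b ^ (-(ν*(1-θ))) * u ^ (-(2*θ)) := by
      apply integral_mono_on h1b2 hInt1 (hIntP1.const_mul _) hptA
    have h2 : (∫ u in (1:ℝ)..(b/2), u ^ (-(2*θ))) ≤ ∫ u in (1:ℝ)..b, u ^ (-(2*θ)) := by
      have hsplit : (∫ u in (1:ℝ)..b, u ^ (-(2*θ)))
          = (∫ u in (1:ℝ)..(b/2), u ^ (-(2*θ))) + ∫ u in (b/2)..b, u ^ (-(2*θ)) :=
        (integral_add_adjacent_intervals hIntP1 hIntP2).symm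
      have hpos2 : 0 ≤ ∫ u in (b/2)..b, u ^ (-(2*θ)) := by
        apply intervalIntegral.integral_nonneg hb2b
        intro u hu
        exact Real.rpow_nonneg (by linarith [hu.1]) _
      linarith
    rw [intervalIntegral.integral_const_mul] at h1
    calc (∫ u in (1:ℝ)..(b/2), f u)
        ≤ cθ ^ (-ν) * b ^ (-(ν*(1-θ))) * ∫ u in (1:ℝ)..(b/2), u ^ (-(2*θ)) := h1
      _ ≤ cθ ^ (-ν) * b ^ (-(ν*(1-θ))) * ∫ u in (1:ℝ)..b, u ^ (-(2*θ)) :=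
          mul_le_mul_of_nonneg_left h2 hKA.le
  -- Part B : on [b/2, b]
  set c : ℝ := (1-θ) * b ^ (-θ) with hcdef
  have hc : 0 < c := mul_pos (by linarith) (Real.rpow_pos_of_pos hb0 _)
  have hKB : (0:ℝ) < 2 ^ (2*θ : ℝ) * b ^ (-(2*θ)) :=
    mul_pos (Real.rpow_pos_of_pos two_pos _) (Real.rpow_pos_of_pos hb0 _)
  have hcontB : ContinuousOn (fun u : ℝ => (1 + (c * (b - u)) ^ ν)⁻¹) (Set.Icc (b/2) b) := by
    apply (contJ hν hc.le (Set.Subset.refl _)).comp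
      (continuousOn_const.sub continuousOn_id)
    intro x hx
    simp only [Set.mem_Ici, id_eq, Pi.sub_apply]
    linarith [hx.2]
  have hIntB : IntervalIntegrable (fun u : ℝ => (1 + (c * (b - u)) ^ ν)⁻¹) volume (b/2) b := by
    apply ContinuousOn.intervalIntegrable
    rwa [Set.uIcc_of_le hb2b]
  have hB : (∫ u in (b/2)..b, f u)
      ≤ 2 ^ (2*θ : ℝ) * b ^ (-(2*θ)) * ∫ s in (0:ℝ)..b/2, (1 + (c * s) ^ ν)⁻¹ := by
    have hptB : ∀ u ∈ Set.Icc (b/2) b,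
        f u ≤ 2 ^ (2*θ : ℝ) * b ^ (-(2*θ)) * (1 + (c * (b - u)) ^ ν)⁻¹ := by
      intro u hu
      have hu0 : (0:ℝ) < u := by linarith [hu.1]
      have hub : u ∈ Set.Icc (1:ℝ) b := ⟨by linarith [hu.1], hu.2⟩
      -- numerator bound
      have hnum : u ^ (-(2*θ)) ≤ 2 ^ (2*θ : ℝ) * b ^ (-(2*θ)) := by
        have h1 : (b/2 : ℝ) ^ (-(2*θ)) = 2 ^ (2*θ:ℝ) * b ^ (-(2*θ)) := by
          rw [Real.div_rpow hb0.le (by norm_num : (0:ℝ) ≤ 2),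
            Real.rpow_neg hb0.le, Real.rpow_neg (by norm_num : (0:ℝ) ≤ 2)]
          field_simp
        rw [← h1]
        exact Real.rpow_le_rpow_of_nonpos (by linarith) hu.1 (by linarith)
      -- denominator bound via Bernoulli
      have hbern : c * (b - u) ≤ b ^ (1-θ) - u ^ (1-θ) := by
        have hs : (-1:ℝ) ≤ u/b - 1 := by
          rw [le_sub_iff_add_le]
          have : 0 ≤ u / b := div_nonneg hu0.le hb0.le
          linarith
        have hber := rpow_one_add_le_one_add_mul_self hs (by linarith : (0:ℝ) ≤ 1-θ)
          (by linarith : (1-θ:ℝ) ≤ 1)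
        rw [show (1 + (u/b - 1) : ℝ) = u/b by ring] at hber
        have hdiv : (u/b) ^ (1-θ:ℝ) = u ^ (1-θ) / b ^ (1-θ) := Real.div_rpow hu0.le hb0.le _
        rw [hdiv] at hber
        have hbp : (0:ℝ) < b ^ (1-θ) := Real.rpow_pos_of_pos hb0 _
        have hq : b ^ (1-θ:ℝ) = b ^ (-θ:ℝ) * b := by
          rw [← Real.rpow_add_one (ne_of_gt hb0), show (-θ + 1 : ℝ) = 1-θ by ring]
        -- multiply Bernoulli by b^(1-θ)
        have h2 : u ^ (1-θ) ≤ b ^ (1-θ) + (1-θ) * (b ^ (1-θ)) * (u/b - 1) := by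
          have := mul_le_mul_of_nonneg_left hber hbp.le
          rw [mul_div_cancel₀ _ (ne_of_gt hbp)] at this
          nlinarith
        have h3 : (1-θ) * (b ^ (1-θ)) * (u/b - 1) = -((1-θ) * b ^ (-θ:ℝ) * (b - u)) := by
          rw [hq]; field_simp; ring
        rw [h3] at h2
        simp only [hcdef]
        linarith
      have hc0' : 0 ≤ c * (b - u) := mul_nonneg hc.le (by linarith [hu.2])
      have hDen : 1 + (c * (b-u)) ^ ν ≤ 1 + (b ^ (1-θ) - u ^ (1-θ)) ^ ν := by
        have := Real.rpow_le_rpow hc0' hbern hν.le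
        linarith
      have hDpos : (0:ℝ) < 1 + (c * (b-u)) ^ ν := by
        have : 0 ≤ (c * (b-u)) ^ ν := Real.rpow_nonneg hc0' _
        linarith
      have : f u ≤ (2 ^ (2*θ:ℝ) * b ^ (-(2*θ))) / (1 + (c * (b-u)) ^ ν) :=
        div_le_div₀ hKB.le hnum hDpos hDen
      rwa [div_eq_mul_inv] at this
    have h1 : (∫ u in (b/2)..b, f u)
        ≤ ∫ u in (b/2)..b, 2 ^ (2*θ:ℝ) * b ^ (-(2*θ)) * (1 + (c * (b - u)) ^ ν)⁻¹ :=
      integral_mono_on hb2b hInt2 (hIntB.const_mul _) hptB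
    rw [intervalIntegral.integral_const_mul] at h1
    have h2 : (∫ u in (b/2)..b, (1 + (c * (b - u)) ^ ν)⁻¹)
        = ∫ s in (0:ℝ)..b/2, (1 + (c * s) ^ ν)⁻¹ := by
      have := intervalIntegral.integral_comp_sub_left
        (a := b/2) (b := b) (fun s : ℝ => (1 + (c * s) ^ ν)⁻¹) b
      rw [this, show b - b = (0:ℝ) by ring, show b - b/2 = b/2 by ring]
    rw [h2] at h1
    exact h1
  linarith

lemma rpow_combine {b : ℝ} (hb0 : 0 < b) {x y z : ℝ} (h : x + y = z) :
    b ^ x * b ^ y = b ^ z := by rw [← Real.rpow_add hb0, h]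

lemma cinv_eq {θ b : ℝ} (hθ1 : θ < 1) (hb0 : 0 < b) :
    ((1-θ) * b ^ (-θ:ℝ))⁻¹ = (1-θ)⁻¹ * b ^ (θ:ℝ) := by
  rw [mul_inv, Real.rpow_neg hb0.le, inv_inv]

lemma cpow_eq {θ ν b : ℝ} (hθ1 : θ < 1) (hb0 : 0 < b) :
    ((1-θ) * b ^ (-θ:ℝ)) ^ (-ν) = (1-θ) ^ (-ν) * b ^ (θ*ν) := by
  rw [Real.mul_rpow (by linarith) (Real.rpow_nonneg hb0.le _),
    ← Real.rpow_mul hb0.le, show (-θ * -ν : ℝ) = θ*ν by ring]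

lemma Apart_lt {θ ν b : ℝ} (hθ : 0 < θ) (hθ2 : θ < 1/2) (hν : 0 < ν) (hb : 2 ≤ b) :
    (1 - 2 ^ (θ-1) : ℝ) ^ (-ν) * b ^ (-(ν*(1-θ))) * (∫ u in (1:ℝ)..b, u ^ (-(2*θ)))
      ≤ ((1 - 2 ^ (θ-1) : ℝ) ^ (-ν) / (1-2*θ)) * b ^ (1-2*θ-ν*(1-θ)) := by
  have hb0 : (0:ℝ) < b := by linarith
  have hc2 : (2:ℝ) ^ (θ-1 : ℝ) < 1 :=
    Real.rpow_lt_one_of_one_lt_of_neg one_lt_two (by linarith)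
  have hKA : (0:ℝ) ≤ (1 - 2 ^ (θ-1) : ℝ) ^ (-ν) * b ^ (-(ν*(1-θ))) :=
    le_of_lt (mul_pos (Real.rpow_pos_of_pos (by linarith) _) (Real.rpow_pos_of_pos hb0 _))
  calc (1 - 2 ^ (θ-1) : ℝ) ^ (-ν) * b ^ (-(ν*(1-θ))) * (∫ u in (1:ℝ)..b, u ^ (-(2*θ)))
      ≤ (1 - 2 ^ (θ-1) : ℝ) ^ (-ν) * b ^ (-(ν*(1-θ))) * (b ^ (1-2*θ) / (1-2*θ)) :=
        mul_le_mul_of_nonneg_left (P_lt hθ2 (by linarith)) hKA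
    _ = ((1 - 2 ^ (θ-1) : ℝ) ^ (-ν) / (1-2*θ)) * (b ^ (-(ν*(1-θ))) * b ^ (1-2*θ)) := by ring
    _ = ((1 - 2 ^ (θ-1) : ℝ) ^ (-ν) / (1-2*θ)) * b ^ (1-2*θ-ν*(1-θ)) := by
        rw [rpow_combine hb0 (by ring : -(ν*(1-θ)) + (1-2*θ) = 1-2*θ-ν*(1-θ))]

lemma Apart_gt {θ ν b : ℝ} (hθ2 : 1/2 < θ) (hθ1 : θ < 1) (hν : 0 < ν) (hb : 2 ≤ b) :
    (1 - 2 ^ (θ-1) : ℝ) ^ (-ν) * b ^ (-(ν*(1-θ))) * (∫ u in (1:ℝ)..b, u ^ (-(2*θ)))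
      ≤ ((1 - 2 ^ (θ-1) : ℝ) ^ (-ν) / (2*θ-1)) * b ^ (-(ν*(1-θ))) := by
  have hb0 : (0:ℝ) < b := by linarith
  have hc2 : (2:ℝ) ^ (θ-1 : ℝ) < 1 :=
    Real.rpow_lt_one_of_one_lt_of_neg one_lt_two (by linarith)
  have hKA : (0:ℝ) ≤ (1 - 2 ^ (θ-1) : ℝ) ^ (-ν) * b ^ (-(ν*(1-θ))) :=
    le_of_lt (mul_pos (Real.rpow_pos_of_pos (by linarith) _) (Real.rpow_pos_of_pos hb0 _))
  calc (1 - 2 ^ (θ-1) : ℝ) ^ (-ν) * b ^ (-(ν*(1-θ))) * (∫ u in (1:ℝ)..b, u ^ (-(2*θ)))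
      ≤ (1 - 2 ^ (θ-1) : ℝ) ^ (-ν) * b ^ (-(ν*(1-θ))) * (1/(2*θ-1)) :=
        mul_le_mul_of_nonneg_left (P_gt hθ2 (by linarith)) hKA
    _ = ((1 - 2 ^ (θ-1) : ℝ) ^ (-ν) / (2*θ-1)) * b ^ (-(ν*(1-θ))) := by ring

lemma Apart_eq {ν b : ℝ} (hν : 0 < ν) (hb : 2 ≤ b) :
    (1 - 2 ^ ((1/2:ℝ)-1) : ℝ) ^ (-ν) * b ^ (-(ν*(1-(1/2:ℝ)))) *
        (∫ u in (1:ℝ)..b, u ^ (-(2*(1/2:ℝ))))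
      = (1 - 2 ^ ((1/2:ℝ)-1) : ℝ) ^ (-ν) * b ^ (-(ν*(1-(1/2:ℝ)))) * Real.log b := by
  rw [show (-(2*(1/2:ℝ))) = (-1:ℝ) by norm_num, P_eq (by linarith)]

lemma Bpart_gt {θ ν b : ℝ} (hθ : 0 < θ) (hθ1 : θ < 1) (hν1 : 1 < ν) (hb : 2 ≤ b) :
    2 ^ (2*θ:ℝ) * b ^ (-(2*θ)) * (∫ s in (0:ℝ)..b/2, (1 + ((1-θ) * b ^ (-θ:ℝ) * s) ^ ν)⁻¹)
      ≤ (2 ^ (2*θ:ℝ) * (1-θ)⁻¹ * (1 + (ν-1)⁻¹)) * b ^ (-θ) := by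
  have hb0 : (0:ℝ) < b := by linarith
  have hc : 0 < (1-θ) * b ^ (-θ:ℝ) := mul_pos (by linarith) (Real.rpow_pos_of_pos hb0 _)
  have hKB : (0:ℝ) ≤ 2 ^ (2*θ:ℝ) * b ^ (-(2*θ)) :=
    le_of_lt (mul_pos (Real.rpow_pos_of_pos two_pos _) (Real.rpow_pos_of_pos hb0 _))
  have hJ := J_gt hc hν1 (by linarith : (0:ℝ) ≤ b/2)
  have hJ' : (∫ s in (0:ℝ)..b/2, (1 + ((1-θ) * b ^ (-θ:ℝ) * s) ^ ν)⁻¹)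
      ≤ (1-θ)⁻¹ * b ^ (θ:ℝ) * (1 + (ν-1)⁻¹) := by
    rw [← cinv_eq hθ1 hb0]
    have : ((1-θ) * b ^ (-θ:ℝ))⁻¹ + ((1-θ) * b ^ (-θ:ℝ))⁻¹ / (ν-1)
        = ((1-θ) * b ^ (-θ:ℝ))⁻¹ * (1 + (ν-1)⁻¹) := by
      rw [mul_add, mul_one, ← div_eq_mul_inv]
    linarith [hJ, this.symm.le]
  calc 2 ^ (2*θ:ℝ) * b ^ (-(2*θ)) * (∫ s in (0:ℝ)..b/2, (1 + ((1-θ) * b ^ (-θ:ℝ) * s) ^ ν)⁻¹)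
      ≤ 2 ^ (2*θ:ℝ) * b ^ (-(2*θ)) * ((1-θ)⁻¹ * b ^ (θ:ℝ) * (1 + (ν-1)⁻¹)) :=
        mul_le_mul_of_nonneg_left hJ' hKB
    _ = (2 ^ (2*θ:ℝ) * (1-θ)⁻¹ * (1 + (ν-1)⁻¹)) * (b ^ (-(2*θ)) * b ^ (θ:ℝ)) := by ring
    _ = (2 ^ (2*θ:ℝ) * (1-θ)⁻¹ * (1 + (ν-1)⁻¹)) * b ^ (-θ) := by
        rw [rpow_combine hb0 (by ring : -(2*θ) + θ = -θ)]

lemma Bpart_eq {θ b : ℝ} (hθ : 0 < θ) (hθ1 : θ < 1) (hb : 2 ≤ b) :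
    2 ^ (2*θ:ℝ) * b ^ (-(2*θ)) * (∫ s in (0:ℝ)..b/2, (1 + ((1-θ) * b ^ (-θ:ℝ) * s) ^ (1:ℝ))⁻¹)
      ≤ (2 ^ (2*θ:ℝ) * (1-θ)⁻¹) * (b ^ (-θ)) * (1 + Real.log b) := by
  have hb0 : (0:ℝ) < b := by linarith
  have hc : 0 < (1-θ) * b ^ (-θ:ℝ) := mul_pos (by linarith) (Real.rpow_pos_of_pos hb0 _)
  have hKB : (0:ℝ) ≤ 2 ^ (2*θ:ℝ) * b ^ (-(2*θ)) :=
    le_of_lt (mul_pos (Real.rpow_pos_of_pos two_pos _) (Real.rpow_pos_of_pos hb0 _))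
  have hJ := J_eq hc (by linarith : (0:ℝ) ≤ b/2)
  have hmaxb : max 1 ((1-θ) * b ^ (-θ:ℝ) * (b/2)) ≤ b := by
    apply max_le (by linarith)
    have h1 : b ^ (-θ:ℝ) * b = b ^ (1-θ:ℝ) := by
      rw [← Real.rpow_add_one (ne_of_gt hb0), show (-θ+1:ℝ) = 1-θ by ring]
    have h2 : b ^ (1-θ:ℝ) ≤ b := by
      have := Real.rpow_le_rpow_of_exponent_le (by linarith : (1:ℝ) ≤ b)
        (by linarith : (1-θ:ℝ) ≤ 1)
      rwa [Real.rpow_one] at this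
    have h3 : (1-θ) * b ^ (-θ:ℝ) * (b/2) = (1-θ)/2 * (b ^ (-θ:ℝ) * b) := by ring
    rw [h3, h1]
    have hp : 0 < b ^ (1-θ:ℝ) := Real.rpow_pos_of_pos hb0 _
    nlinarith
  have hlog : Real.log (max 1 ((1-θ) * b ^ (-θ:ℝ) * (b/2))) ≤ Real.log b :=
    Real.log_le_log (lt_of_lt_of_le one_pos (le_max_left _ _)) hmaxb
  have hJ' : (∫ s in (0:ℝ)..b/2, (1 + ((1-θ) * b ^ (-θ:ℝ) * s) ^ (1:ℝ))⁻¹)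
      ≤ (1-θ)⁻¹ * b ^ (θ:ℝ) * (1 + Real.log b) := by
    have h0 : (0:ℝ) < ((1-θ) * b ^ (-θ:ℝ))⁻¹ := inv_pos.mpr hc
    calc (∫ s in (0:ℝ)..b/2, (1 + ((1-θ) * b ^ (-θ:ℝ) * s) ^ (1:ℝ))⁻¹)
        ≤ ((1-θ) * b ^ (-θ:ℝ))⁻¹ * (1 + Real.log (max 1 ((1-θ) * b ^ (-θ:ℝ) * (b/2)))) := hJ
      _ ≤ ((1-θ) * b ^ (-θ:ℝ))⁻¹ * (1 + Real.log b) := by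
          apply mul_le_mul_of_nonneg_left (by linarith) h0.le
      _ = (1-θ)⁻¹ * b ^ (θ:ℝ) * (1 + Real.log b) := by rw [cinv_eq hθ1 hb0]
  calc 2 ^ (2*θ:ℝ) * b ^ (-(2*θ)) *
        (∫ s in (0:ℝ)..b/2, (1 + ((1-θ) * b ^ (-θ:ℝ) * s) ^ (1:ℝ))⁻¹)
      ≤ 2 ^ (2*θ:ℝ) * b ^ (-(2*θ)) * ((1-θ)⁻¹ * b ^ (θ:ℝ) * (1 + Real.log b)) :=
        mul_le_mul_of_nonneg_left hJ' hKB
    _ = (2 ^ (2*θ:ℝ) * (1-θ)⁻¹) * (b ^ (-(2*θ)) * b ^ (θ:ℝ)) * (1 + Real.log b) := by ring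
    _ = (2 ^ (2*θ:ℝ) * (1-θ)⁻¹) * (b ^ (-θ)) * (1 + Real.log b) := by
        rw [rpow_combine hb0 (by ring : -(2*θ) + θ = -θ)]

lemma Bpart_lt {θ ν b : ℝ} (hθ : 0 < θ) (hθ1 : θ < 1) (hν : 0 < ν) (hν1 : ν < 1) (hb : 2 ≤ b) :
    2 ^ (2*θ:ℝ) * b ^ (-(2*θ)) * (∫ s in (0:ℝ)..b/2, (1 + ((1-θ) * b ^ (-θ:ℝ) * s) ^ ν)⁻¹)
      ≤ (2 ^ (2*θ:ℝ) * (1-θ)⁻¹) * b ^ (-θ)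
        + (2 ^ (2*θ:ℝ) * (1-θ) ^ (-ν) / (1-ν)) * b ^ (1-2*θ-ν*(1-θ)) := by
  have hb0 : (0:ℝ) < b := by linarith
  have hc : 0 < (1-θ) * b ^ (-θ:ℝ) := mul_pos (by linarith) (Real.rpow_pos_of_pos hb0 _)
  have hKB : (0:ℝ) ≤ 2 ^ (2*θ:ℝ) * b ^ (-(2*θ)) :=
    le_of_lt (mul_pos (Real.rpow_pos_of_pos two_pos _) (Real.rpow_pos_of_pos hb0 _))
  have hJ := J_lt hc hν hν1 (by linarith : (0:ℝ) ≤ b/2)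
  have hcpow : ((1-θ) * b ^ (-θ:ℝ)) ^ (-ν) = (1-θ) ^ (-ν) * b ^ (θ*ν) := cpow_eq hθ1 hb0
  have hhalf : ((b:ℝ)/2) ^ (1-ν:ℝ) ≤ b ^ (1-ν:ℝ) :=
    Real.rpow_le_rpow (by linarith) (by linarith) (by linarith)
  have hJ' : (∫ s in (0:ℝ)..b/2, (1 + ((1-θ) * b ^ (-θ:ℝ) * s) ^ ν)⁻¹)
      ≤ (1-θ)⁻¹ * b ^ (θ:ℝ) + (1-θ) ^ (-ν) * b ^ (θ*ν) * b ^ (1-ν:ℝ) / (1-ν) := by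
    have h2 : ((1-θ) * b ^ (-θ:ℝ)) ^ (-ν) * ((b:ℝ)/2) ^ (1-ν:ℝ) / (1-ν)
        ≤ (1-θ) ^ (-ν) * b ^ (θ*ν) * b ^ (1-ν:ℝ) / (1-ν) := by
      rw [hcpow]
      apply div_le_div_of_nonneg_right ?_ (by linarith)
      · exact mul_le_mul_of_nonneg_left hhalf
          (le_of_lt (mul_pos (Real.rpow_pos_of_pos (by linarith) _)
            (Real.rpow_pos_of_pos hb0 _)))
    rw [cinv_eq hθ1 hb0] at hJ
    linarith
  have hnn1 : (0:ℝ) ≤ (1-θ)⁻¹ * b ^ (θ:ℝ) :=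
    le_of_lt (mul_pos (inv_pos.mpr (by linarith)) (Real.rpow_pos_of_pos hb0 _))
  calc 2 ^ (2*θ:ℝ) * b ^ (-(2*θ)) * (∫ s in (0:ℝ)..b/2, (1 + ((1-θ) * b ^ (-θ:ℝ) * s) ^ ν)⁻¹)
      ≤ 2 ^ (2*θ:ℝ) * b ^ (-(2*θ)) *
          ((1-θ)⁻¹ * b ^ (θ:ℝ) + (1-θ) ^ (-ν) * b ^ (θ*ν) * b ^ (1-ν:ℝ) / (1-ν)) :=
        mul_le_mul_of_nonneg_left hJ' hKB
    _ = (2 ^ (2*θ:ℝ) * (1-θ)⁻¹) * (b ^ (-(2*θ)) * b ^ (θ:ℝ))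
        + (2 ^ (2*θ:ℝ) * (1-θ) ^ (-ν) / (1-ν)) * (b ^ (-(2*θ)) * b ^ (θ*ν) * b ^ (1-ν:ℝ)) := by
        ring
    _ = (2 ^ (2*θ:ℝ) * (1-θ)⁻¹) * b ^ (-θ)
        + (2 ^ (2*θ:ℝ) * (1-θ) ^ (-ν) / (1-ν)) * b ^ (1-2*θ-ν*(1-θ)) := by
        rw [rpow_combine hb0 (by ring : -(2*θ) + θ = -θ),
          rpow_combine hb0 (by ring : -(2*θ) + θ*ν = θ*ν - 2*θ),
          rpow_combine hb0 (by ring : (θ*ν - 2*θ) + (1-ν) = 1-2*θ-ν*(1-θ))]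

lemma term_le {b C e w : ℝ} (hb : 2 ≤ b) (hC : 0 ≤ C) (he : e ≤ w) :
    C * b ^ e ≤ C * b ^ w :=
  mul_le_mul_of_nonneg_left (Real.rpow_le_rpow_of_exponent_le (by linarith) he) hC

lemma term_log_le {b C e w : ℝ} (hb : 2 ≤ b) (hC : 0 ≤ C) (he : e < w) :
    C * b ^ e * Real.log b ≤ (C * (w - e)⁻¹) * b ^ w := by
  have hb0 : (0:ℝ) < b := by linarith
  have h1 : Real.log b ≤ (w-e)⁻¹ * b ^ (w-e) := log_absorb (by linarith) (by linarith)
  have hbe : (0:ℝ) ≤ C * b ^ e := mul_nonneg hC (Real.rpow_nonneg hb0.le _)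
  calc C * b ^ e * Real.log b ≤ C * b ^ e * ((w-e)⁻¹ * b ^ (w-e)) :=
        mul_le_mul_of_nonneg_left h1 hbe
    _ = (C * (w-e)⁻¹) * (b ^ e * b ^ (w-e)) := by ring
    _ = (C * (w-e)⁻¹) * b ^ w := by rw [rpow_combine hb0 (by ring : e + (w-e) = w)]

lemma log2_le_log {b : ℝ} (hb : 2 ≤ b) : (0:ℝ) < Real.log 2 ∧ Real.log 2 ≤ Real.log b :=
  ⟨Real.log_pos one_lt_two, Real.log_le_log two_pos hb⟩

lemma pad_log {b C w : ℝ} (hb : 2 ≤ b) (hC : 0 ≤ C) :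
    C * b ^ w ≤ (C * (Real.log 2)⁻¹) * b ^ w * Real.log b := by
  obtain ⟨hl2, hlb⟩ := log2_le_log hb
  have h1 : 1 ≤ (Real.log 2)⁻¹ * Real.log b := by
    rw [← div_eq_inv_mul, le_div_iff₀ hl2]; linarith
  have hbw : (0:ℝ) ≤ C * b ^ w := mul_nonneg hC (Real.rpow_nonneg (by linarith) _)
  calc C * b ^ w = (C * b ^ w) * 1 := (mul_one _).symm
    _ ≤ (C * b ^ w) * ((Real.log 2)⁻¹ * Real.log b) := mul_le_mul_of_nonneg_left h1 hbw
    _ = (C * (Real.log 2)⁻¹) * b ^ w * Real.log b := by ring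

lemma one_add_log_le {b : ℝ} (hb : 2 ≤ b) :
    1 + Real.log b ≤ ((Real.log 2)⁻¹ + 1) * Real.log b := by
  obtain ⟨hl2, hlb⟩ := log2_le_log hb
  have h1 : 1 ≤ (Real.log 2)⁻¹ * Real.log b := by
    rw [← div_eq_inv_mul, le_div_iff₀ hl2]; linarith
  nlinarith


set_option maxHeartbeats 2000000 in
/-- For `0 < θ < 1` and `ν > 0` there is a constant `C₀ > 0` independent of `b`
such that for every real `b ≥ 2`,
`∫₁^b u^{-2θ}/(1 + (b^{1-θ} - u^{1-θ})^ν) du` is bounded by `C₀·b^ω·log b`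
when `(ν,θ) ∈ Ω`, and by `C₀·b^ω` otherwise. -/
theorem stmt14 (θ ν : ℝ) (hθ : 0 < θ) (hθ1 : θ < 1) (hν : 0 < ν) :
    ∃ C₀ : ℝ, 0 < C₀ ∧ ∀ b : ℝ, 2 ≤ b →
      (((ν, θ) ∈ logSet →
          (∫ u in Set.Icc (1 : ℝ) b,
              u ^ (-(2 * θ)) / (1 + (b ^ (1 - θ) - u ^ (1 - θ)) ^ ν))
            ≤ C₀ * b ^ rateExp ν θ * Real.log b) ∧
        ((ν, θ) ∉ logSet →
          (∫ u in Set.Icc (1 : ℝ) b,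
              u ^ (-(2 * θ)) / (1 + (b ^ (1 - θ) - u ^ (1 - θ)) ^ ν))
            ≤ C₀ * b ^ rateExp ν θ)) := by
  have hc2 : (2:ℝ) ^ (θ-1 : ℝ) < 1 :=
    Real.rpow_lt_one_of_one_lt_of_neg one_lt_two (by linarith)
  have hCA : (0:ℝ) < (1 - 2 ^ (θ-1 : ℝ)) ^ (-ν) :=
    Real.rpow_pos_of_pos (by linarith) _
  have h2t : (0:ℝ) < 2 ^ (2*θ : ℝ) := Real.rpow_pos_of_pos two_pos _
  have h1t : (0:ℝ) < (1-θ)⁻¹ := inv_pos.mpr (by linarith)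
  have h1tp : (0:ℝ) < (1-θ) ^ (-ν) := Real.rpow_pos_of_pos (by linarith) _
  have hl2 : (0:ℝ) < Real.log 2 := Real.log_pos one_lt_two
  rcases lt_trichotomy ν 1 with hν1 | hν1 | hν1
  · -- ν < 1
    rcases lt_trichotomy θ (1/2) with hθ2 | hθ2 | hθ2
    · -- case 1 : ν < 1, θ < 1/2, not in logSet
      have hrate : rateExp ν θ = 1 - 2*θ - ν + ν*θ := by
        rw [rateExp, if_pos ⟨hν1.le, hθ2.le⟩]
      have hnot : (ν,θ) ∉ logSet := by
        rintro (⟨_,_,h⟩|⟨h,_,_⟩) <;> simp at h <;> linarith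
      refine ⟨(1 - 2 ^ (θ-1:ℝ)) ^ (-ν) / (1-2*θ) + 2 ^ (2*θ:ℝ) * (1-θ)⁻¹
        + 2 ^ (2*θ:ℝ) * (1-θ) ^ (-ν) / (1-ν),
        by
          have p1 := div_pos hCA (by linarith : (0:ℝ) < 1-2*θ)
          have p2 := mul_pos h2t h1t
          have p3 := div_pos (mul_pos h2t h1tp) (by linarith : (0:ℝ) < 1-ν)
          linarith,
        fun b hb => ⟨fun hmem => (hnot hmem).elim, fun _ => ?_⟩⟩
      have hM := master hθ hθ1 hν hb
      have hA := Apart_lt hθ hθ2 hν hb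
      have hB := Bpart_lt hθ hθ1 hν hν1 hb
      have he1 : 1-2*θ-ν*(1-θ) ≤ rateExp ν θ := le_of_eq (by rw [hrate]; ring)
      have he2 : -θ ≤ rateExp ν θ := by
        rw [hrate]
        nlinarith [mul_nonneg (by linarith : (0:ℝ) ≤ 1-θ) (by linarith : (0:ℝ) ≤ 1-ν)]
      have t1 := term_le (C := (1 - 2 ^ (θ-1:ℝ)) ^ (-ν) / (1-2*θ)) hb
        (le_of_lt (div_pos hCA (by linarith : (0:ℝ) < 1-2*θ))) he1
      have t2 := term_le (C := 2 ^ (2*θ:ℝ) * (1-θ)⁻¹) hb (le_of_lt (mul_pos h2t h1t)) he2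
      have t3 := term_le (C := 2 ^ (2*θ:ℝ) * (1-θ) ^ (-ν) / (1-ν)) hb
        (le_of_lt (div_pos (mul_pos h2t h1tp) (by linarith : (0:ℝ) < 1-ν))) he1
      calc (∫ u in Set.Icc (1 : ℝ) b,
              u ^ (-(2 * θ)) / (1 + (b ^ (1 - θ) - u ^ (1 - θ)) ^ ν))
          ≤ _ := hM
        _ ≤ ((1 - 2 ^ (θ-1:ℝ)) ^ (-ν) / (1-2*θ)) * b ^ (1-2*θ-ν*(1-θ))
            + ((2 ^ (2*θ:ℝ) * (1-θ)⁻¹) * b ^ (-θ)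
              + (2 ^ (2*θ:ℝ) * (1-θ) ^ (-ν) / (1-ν)) * b ^ (1-2*θ-ν*(1-θ))) :=
            add_le_add hA hB
        _ ≤ ((1 - 2 ^ (θ-1:ℝ)) ^ (-ν) / (1-2*θ)) * b ^ rateExp ν θ
            + ((2 ^ (2*θ:ℝ) * (1-θ)⁻¹) * b ^ rateExp ν θ
              + (2 ^ (2*θ:ℝ) * (1-θ) ^ (-ν) / (1-ν)) * b ^ rateExp ν θ) :=
            add_le_add t1 (add_le_add t2 t3)
        _ = ((1 - 2 ^ (θ-1:ℝ)) ^ (-ν) / (1-2*θ) + 2 ^ (2*θ:ℝ) * (1-θ)⁻¹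
            + 2 ^ (2*θ:ℝ) * (1-θ) ^ (-ν) / (1-ν)) * b ^ rateExp ν θ := by ring
    · -- case 2 : ν < 1, θ = 1/2, in logSet
      subst hθ2
      have hrate : rateExp ν (1/2) = 1 - 2*(1/2) - ν + ν*(1/2) := by
        rw [rateExp, if_pos ⟨hν1.le, le_refl _⟩]
      have hmem : (ν, (1/2:ℝ)) ∈ logSet := Or.inl ⟨hν, hν1.le, rfl⟩
      refine ⟨(1 - 2 ^ ((1/2:ℝ)-1)) ^ (-ν)
        + (2 ^ (2*(1/2:ℝ)) * (1-(1/2:ℝ))⁻¹ + 2 ^ (2*(1/2:ℝ)) * (1-(1/2:ℝ)) ^ (-ν) / (1-ν))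
          * (Real.log 2)⁻¹,
        by
          have p2 := mul_pos h2t h1t
          have p3 := div_pos (mul_pos h2t h1tp) (by linarith : (0:ℝ) < 1-ν)
          have p4 : (0:ℝ) < (Real.log 2)⁻¹ := inv_pos.mpr hl2
          nlinarith,
        fun b hb => ⟨fun _ => ?_, fun hnm => (hnm hmem).elim⟩⟩
      obtain ⟨hl2', hlb⟩ := log2_le_log hb
      have hM := master hθ hθ1 hν hb
      have hAeq := Apart_eq hν hb (b := b)
      have hB := Bpart_lt hθ hθ1 hν hν1 hb (b := b)
      rw [hAeq] at hM
      have hbω : b ^ (-(ν*(1-(1/2:ℝ)))) = b ^ rateExp ν (1/2) := by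
        rw [hrate]; congr 1; ring
      have he1 : 1-2*(1/2:ℝ)-ν*(1-(1/2:ℝ)) ≤ rateExp ν (1/2) := le_of_eq (by rw [hrate]; ring)
      have he2 : -(1/2:ℝ) ≤ rateExp ν (1/2) := by rw [hrate]; linarith
      have t2 := term_le (C := 2 ^ (2*(1/2:ℝ)) * (1-(1/2:ℝ))⁻¹) hb
        (le_of_lt (mul_pos h2t h1t)) he2
      have t3 := term_le (C := 2 ^ (2*(1/2:ℝ)) * (1-(1/2:ℝ)) ^ (-ν) / (1-ν)) hb
        (le_of_lt (div_pos (mul_pos h2t h1tp) (by linarith : (0:ℝ) < 1-ν))) he1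
      have tpad := pad_log (C := 2 ^ (2*(1/2:ℝ)) * (1-(1/2:ℝ))⁻¹
          + 2 ^ (2*(1/2:ℝ)) * (1-(1/2:ℝ)) ^ (-ν) / (1-ν)) (w := rateExp ν (1/2)) hb
        (by
          have p2 := mul_pos h2t h1t
          have p3 := div_pos (mul_pos h2t h1tp) (by linarith : (0:ℝ) < 1-ν)
          linarith)
      calc (∫ u in Set.Icc (1 : ℝ) b,
              u ^ (-(2 * (1/2:ℝ))) / (1 + (b ^ (1 - (1/2:ℝ)) - u ^ (1 - (1/2:ℝ))) ^ ν))
          ≤ _ := hM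
        _ ≤ (1 - 2 ^ ((1/2:ℝ)-1)) ^ (-ν) * b ^ (-(ν*(1-(1/2:ℝ)))) * Real.log b
            + ((2 ^ (2*(1/2:ℝ)) * (1-(1/2:ℝ))⁻¹) * b ^ rateExp ν (1/2)
              + (2 ^ (2*(1/2:ℝ)) * (1-(1/2:ℝ)) ^ (-ν) / (1-ν)) * b ^ rateExp ν (1/2)) :=
            add_le_add le_rfl (le_trans hB (add_le_add t2 t3))
        _ = (1 - 2 ^ ((1/2:ℝ)-1)) ^ (-ν) * b ^ rateExp ν (1/2) * Real.log b
            + (2 ^ (2*(1/2:ℝ)) * (1-(1/2:ℝ))⁻¹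
              + 2 ^ (2*(1/2:ℝ)) * (1-(1/2:ℝ)) ^ (-ν) / (1-ν)) * b ^ rateExp ν (1/2) := by
            rw [hbω]; ring
        _ ≤ (1 - 2 ^ ((1/2:ℝ)-1)) ^ (-ν) * b ^ rateExp ν (1/2) * Real.log b
            + ((2 ^ (2*(1/2:ℝ)) * (1-(1/2:ℝ))⁻¹
              + 2 ^ (2*(1/2:ℝ)) * (1-(1/2:ℝ)) ^ (-ν) / (1-ν)) * (Real.log 2)⁻¹)
                * b ^ rateExp ν (1/2) * Real.log b := add_le_add le_rfl tpad
        _ = ((1 - 2 ^ ((1/2:ℝ)-1)) ^ (-ν)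
            + (2 ^ (2*(1/2:ℝ)) * (1-(1/2:ℝ))⁻¹ + 2 ^ (2*(1/2:ℝ)) * (1-(1/2:ℝ)) ^ (-ν) / (1-ν))
              * (Real.log 2)⁻¹) * b ^ rateExp ν (1/2) * Real.log b := by ring
    · -- case 3 : ν < 1, θ > 1/2, not in logSet
      have hrate : rateExp ν θ = -ν*(1-θ) := by
        rw [rateExp, if_neg (fun h => by linarith [h.2]), if_neg (fun h => by linarith [h.1])]
      have hnot : (ν,θ) ∉ logSet := by
        rintro (⟨_,_,h⟩|⟨h,_,_⟩) <;> simp at h <;> linarith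
      refine ⟨(1 - 2 ^ (θ-1:ℝ)) ^ (-ν) / (2*θ-1) + 2 ^ (2*θ:ℝ) * (1-θ)⁻¹
        + 2 ^ (2*θ:ℝ) * (1-θ) ^ (-ν) / (1-ν),
        by
          have p1 := div_pos hCA (by linarith : (0:ℝ) < 2*θ-1)
          have p2 := mul_pos h2t h1t
          have p3 := div_pos (mul_pos h2t h1tp) (by linarith : (0:ℝ) < 1-ν)
          linarith,
        fun b hb => ⟨fun hmem => (hnot hmem).elim, fun _ => ?_⟩⟩
      have hM := master hθ hθ1 hν hb
      have hA := Apart_gt hθ2 hθ1 hν hb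
      have hB := Bpart_lt hθ hθ1 hν hν1 hb
      have he1 : -(ν*(1-θ)) ≤ rateExp ν θ := le_of_eq (by rw [hrate]; ring)
      have he2 : -θ ≤ rateExp ν θ := by
        rw [hrate]
        nlinarith [mul_pos hν (by linarith : (0:ℝ) < 1-θ)]
      have he3 : 1-2*θ-ν*(1-θ) ≤ rateExp ν θ := by rw [hrate]; nlinarith
      have t1 := term_le (C := (1 - 2 ^ (θ-1:ℝ)) ^ (-ν) / (2*θ-1)) hb
        (le_of_lt (div_pos hCA (by linarith : (0:ℝ) < 2*θ-1))) he1
      have t2 := term_le (C := 2 ^ (2*θ:ℝ) * (1-θ)⁻¹) hb (le_of_lt (mul_pos h2t h1t)) he2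
      have t3 := term_le (C := 2 ^ (2*θ:ℝ) * (1-θ) ^ (-ν) / (1-ν)) hb
        (le_of_lt (div_pos (mul_pos h2t h1tp) (by linarith : (0:ℝ) < 1-ν))) he3
      calc (∫ u in Set.Icc (1 : ℝ) b,
              u ^ (-(2 * θ)) / (1 + (b ^ (1 - θ) - u ^ (1 - θ)) ^ ν))
          ≤ _ := hM
        _ ≤ ((1 - 2 ^ (θ-1:ℝ)) ^ (-ν) / (2*θ-1)) * b ^ (-(ν*(1-θ)))
            + ((2 ^ (2*θ:ℝ) * (1-θ)⁻¹) * b ^ (-θ)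
              + (2 ^ (2*θ:ℝ) * (1-θ) ^ (-ν) / (1-ν)) * b ^ (1-2*θ-ν*(1-θ))) :=
            add_le_add hA hB
        _ ≤ ((1 - 2 ^ (θ-1:ℝ)) ^ (-ν) / (2*θ-1)) * b ^ rateExp ν θ
            + ((2 ^ (2*θ:ℝ) * (1-θ)⁻¹) * b ^ rateExp ν θ
              + (2 ^ (2*θ:ℝ) * (1-θ) ^ (-ν) / (1-ν)) * b ^ rateExp ν θ) :=
            add_le_add t1 (add_le_add t2 t3)
        _ = ((1 - 2 ^ (θ-1:ℝ)) ^ (-ν) / (2*θ-1) + 2 ^ (2*θ:ℝ) * (1-θ)⁻¹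
            + 2 ^ (2*θ:ℝ) * (1-θ) ^ (-ν) / (1-ν)) * b ^ rateExp ν θ := by ring

  · -- ν = 1
    subst hν1
    rcases lt_trichotomy θ (1/2) with hθ2 | hθ2 | hθ2
    · -- case 4 : ν = 1, θ < 1/2, in logSet
      have hrate : rateExp 1 θ = 1 - 2*θ - 1 + 1*θ := by
        rw [rateExp, if_pos ⟨le_refl 1, hθ2.le⟩]
      have hmem : ((1:ℝ), θ) ∈ logSet := Or.inr ⟨rfl, hθ, hθ2.le⟩
      have hbωe : ∀ b : ℝ, 2 ≤ b → b ^ (-θ) = b ^ rateExp 1 θ := fun b hb => by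
        rw [hrate]; congr 1; ring
      refine ⟨((1 - 2 ^ (θ-1:ℝ)) ^ (-(1:ℝ)) / (1-2*θ)) * (Real.log 2)⁻¹
        + (2 ^ (2*θ:ℝ) * (1-θ)⁻¹) * ((Real.log 2)⁻¹ + 1),
        by
          have p1 := div_pos hCA (by linarith : (0:ℝ) < 1-2*θ)
          have p2 := mul_pos h2t h1t
          have p4 : (0:ℝ) < (Real.log 2)⁻¹ := inv_pos.mpr hl2
          nlinarith,
        fun b hb => ⟨fun _ => ?_, fun hnm => (hnm hmem).elim⟩⟩
      have hM := master hθ hθ1 one_pos hb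
      have hA := Apart_lt hθ hθ2 one_pos hb
      have hB := Bpart_eq hθ hθ1 hb
      have he1 : 1-2*θ-1*(1-θ) ≤ rateExp 1 θ := le_of_eq (by rw [hrate]; ring)
      have t1 := term_le (C := (1 - 2 ^ (θ-1:ℝ)) ^ (-(1:ℝ)) / (1-2*θ)) hb
        (le_of_lt (div_pos hCA (by linarith : (0:ℝ) < 1-2*θ))) he1
      have padA := pad_log (C := (1 - 2 ^ (θ-1:ℝ)) ^ (-(1:ℝ)) / (1-2*θ))
        (w := rateExp 1 θ) hb (le_of_lt (div_pos hCA (by linarith : (0:ℝ) < 1-2*θ)))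
      have hBn : (0:ℝ) ≤ (2 ^ (2*θ:ℝ) * (1-θ)⁻¹) * b ^ (-θ) :=
        mul_nonneg (le_of_lt (mul_pos h2t h1t)) (Real.rpow_nonneg (by linarith) _)
      have hB2 : (2 ^ (2*θ:ℝ) * (1-θ)⁻¹) * b ^ (-θ) * (1 + Real.log b)
          ≤ ((2 ^ (2*θ:ℝ) * (1-θ)⁻¹) * ((Real.log 2)⁻¹ + 1)) * b ^ rateExp 1 θ
            * Real.log b := by
        calc (2 ^ (2*θ:ℝ) * (1-θ)⁻¹) * b ^ (-θ) * (1 + Real.log b)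
            ≤ (2 ^ (2*θ:ℝ) * (1-θ)⁻¹) * b ^ (-θ)
              * (((Real.log 2)⁻¹ + 1) * Real.log b) :=
              mul_le_mul_of_nonneg_left (one_add_log_le hb) hBn
          _ = ((2 ^ (2*θ:ℝ) * (1-θ)⁻¹) * ((Real.log 2)⁻¹ + 1)) * b ^ rateExp 1 θ
              * Real.log b := by rw [hbωe b hb]; ring
      calc (∫ u in Set.Icc (1 : ℝ) b,
              u ^ (-(2 * θ)) / (1 + (b ^ (1 - θ) - u ^ (1 - θ)) ^ (1:ℝ)))
          ≤ _ := hM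
        _ ≤ ((1 - 2 ^ (θ-1:ℝ)) ^ (-(1:ℝ)) / (1-2*θ)) * b ^ (1-2*θ-1*(1-θ))
            + (2 ^ (2*θ:ℝ) * (1-θ)⁻¹) * b ^ (-θ) * (1 + Real.log b) := add_le_add hA hB
        _ ≤ ((1 - 2 ^ (θ-1:ℝ)) ^ (-(1:ℝ)) / (1-2*θ)) * b ^ rateExp 1 θ
            + ((2 ^ (2*θ:ℝ) * (1-θ)⁻¹) * ((Real.log 2)⁻¹ + 1)) * b ^ rateExp 1 θ
              * Real.log b := add_le_add t1 hB2
        _ ≤ ((1 - 2 ^ (θ-1:ℝ)) ^ (-(1:ℝ)) / (1-2*θ)) * (Real.log 2)⁻¹ * b ^ rateExp 1 θ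
              * Real.log b
            + ((2 ^ (2*θ:ℝ) * (1-θ)⁻¹) * ((Real.log 2)⁻¹ + 1)) * b ^ rateExp 1 θ
              * Real.log b := add_le_add padA le_rfl
        _ = (((1 - 2 ^ (θ-1:ℝ)) ^ (-(1:ℝ)) / (1-2*θ)) * (Real.log 2)⁻¹
            + (2 ^ (2*θ:ℝ) * (1-θ)⁻¹) * ((Real.log 2)⁻¹ + 1)) * b ^ rateExp 1 θ
              * Real.log b := by ring
    · -- case 5 : ν = 1, θ = 1/2, in logSet
      subst hθ2
      have hrate : rateExp 1 (1/2) = 1 - 2*(1/2) - 1 + 1*(1/2) := by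
        rw [rateExp, if_pos ⟨le_refl 1, le_refl _⟩]
      have hmem : ((1:ℝ), (1/2:ℝ)) ∈ logSet := Or.inr ⟨rfl, by norm_num, le_refl _⟩
      refine ⟨(1 - 2 ^ ((1/2:ℝ)-1)) ^ (-(1:ℝ))
        + (2 ^ (2*(1/2:ℝ)) * (1-(1/2:ℝ))⁻¹) * ((Real.log 2)⁻¹ + 1),
        by
          have p2 := mul_pos h2t h1t
          have p4 : (0:ℝ) < (Real.log 2)⁻¹ := inv_pos.mpr hl2
          nlinarith,
        fun b hb => ⟨fun _ => ?_, fun hnm => (hnm hmem).elim⟩⟩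
      have hM := master hθ hθ1 one_pos hb
      have hAeq := Apart_eq (ν := 1) one_pos hb
      rw [hAeq] at hM
      have hB := Bpart_eq (θ := (1/2:ℝ)) (by norm_num) (by norm_num) hb
      have hbω : b ^ (-(1*(1-(1/2:ℝ)))) = b ^ rateExp 1 (1/2) := by
        rw [hrate]; congr 1; ring
      have hbω2 : b ^ (-(1/2:ℝ)) = b ^ rateExp 1 (1/2) := by
        rw [hrate]; congr 1; ring
      have hBn : (0:ℝ) ≤ (2 ^ (2*(1/2:ℝ)) * (1-(1/2:ℝ))⁻¹) * b ^ (-(1/2:ℝ)) :=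
        mul_nonneg (le_of_lt (mul_pos h2t h1t)) (Real.rpow_nonneg (by linarith) _)
      have hB2 : (2 ^ (2*(1/2:ℝ)) * (1-(1/2:ℝ))⁻¹) * b ^ (-(1/2:ℝ)) * (1 + Real.log b)
          ≤ ((2 ^ (2*(1/2:ℝ)) * (1-(1/2:ℝ))⁻¹) * ((Real.log 2)⁻¹ + 1))
            * b ^ rateExp 1 (1/2) * Real.log b := by
        calc (2 ^ (2*(1/2:ℝ)) * (1-(1/2:ℝ))⁻¹) * b ^ (-(1/2:ℝ)) * (1 + Real.log b)
            ≤ (2 ^ (2*(1/2:ℝ)) * (1-(1/2:ℝ))⁻¹) * b ^ (-(1/2:ℝ))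
              * (((Real.log 2)⁻¹ + 1) * Real.log b) :=
              mul_le_mul_of_nonneg_left (one_add_log_le hb) hBn
          _ = ((2 ^ (2*(1/2:ℝ)) * (1-(1/2:ℝ))⁻¹) * ((Real.log 2)⁻¹ + 1))
              * b ^ rateExp 1 (1/2) * Real.log b := by rw [hbω2]; ring
      calc (∫ u in Set.Icc (1 : ℝ) b,
              u ^ (-(2 * (1/2:ℝ))) / (1 + (b ^ (1 - (1/2:ℝ)) - u ^ (1 - (1/2:ℝ))) ^ (1:ℝ)))
          ≤ _ := hM
        _ ≤ (1 - 2 ^ ((1/2:ℝ)-1)) ^ (-(1:ℝ)) * b ^ (-(1*(1-(1/2:ℝ)))) * Real.log b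
            + (2 ^ (2*(1/2:ℝ)) * (1-(1/2:ℝ))⁻¹) * b ^ (-(1/2:ℝ)) * (1 + Real.log b) :=
            add_le_add le_rfl hB
        _ ≤ (1 - 2 ^ ((1/2:ℝ)-1)) ^ (-(1:ℝ)) * b ^ (-(1*(1-(1/2:ℝ)))) * Real.log b
            + ((2 ^ (2*(1/2:ℝ)) * (1-(1/2:ℝ))⁻¹) * ((Real.log 2)⁻¹ + 1))
              * b ^ rateExp 1 (1/2) * Real.log b := add_le_add le_rfl hB2
        _ = ((1 - 2 ^ ((1/2:ℝ)-1)) ^ (-(1:ℝ))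
            + (2 ^ (2*(1/2:ℝ)) * (1-(1/2:ℝ))⁻¹) * ((Real.log 2)⁻¹ + 1))
              * b ^ rateExp 1 (1/2) * Real.log b := by rw [hbω]; ring
    · -- case 6 : ν = 1, θ > 1/2, not in logSet
      have hrate : rateExp 1 θ = -1*(1-θ) := by
        rw [rateExp, if_neg (fun h => by linarith [h.2]),
          if_neg (fun h => by have := h.2; norm_num at this; linarith)]
      have hnot : ((1:ℝ),θ) ∉ logSet := by
        rintro (⟨_,_,h⟩|⟨_,_,h⟩) <;> simp at h <;> linarith
      have he2 : -θ < rateExp 1 θ := by rw [hrate]; linarith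
      refine ⟨(1 - 2 ^ (θ-1:ℝ)) ^ (-(1:ℝ)) / (2*θ-1)
        + ((2 ^ (2*θ:ℝ) * (1-θ)⁻¹) * ((Real.log 2)⁻¹ + 1)) * (rateExp 1 θ - -θ)⁻¹,
        by
          have p1 := div_pos hCA (by linarith : (0:ℝ) < 2*θ-1)
          have p2 := mul_pos h2t h1t
          have p4 : (0:ℝ) < (Real.log 2)⁻¹ := inv_pos.mpr hl2
          have p5 : (0:ℝ) < (rateExp 1 θ - -θ)⁻¹ := inv_pos.mpr (by linarith)
          have p6 : (0:ℝ) < (2 ^ (2*θ:ℝ) * (1-θ)⁻¹) * ((Real.log 2)⁻¹ + 1) :=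
            mul_pos p2 (by linarith)
          have p7 := mul_pos p6 p5
          linarith,
        fun b hb => ⟨fun hmem => (hnot hmem).elim, fun _ => ?_⟩⟩
      have hM := master hθ hθ1 one_pos hb
      have hA := Apart_gt hθ2 hθ1 one_pos hb
      have hB := Bpart_eq hθ hθ1 hb
      have he1 : -(1*(1-θ)) ≤ rateExp 1 θ := le_of_eq (by rw [hrate]; ring)
      have t1 := term_le (C := (1 - 2 ^ (θ-1:ℝ)) ^ (-(1:ℝ)) / (2*θ-1)) hb
        (le_of_lt (div_pos hCA (by linarith : (0:ℝ) < 2*θ-1))) he1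
      have hBn : (0:ℝ) ≤ (2 ^ (2*θ:ℝ) * (1-θ)⁻¹) * b ^ (-θ) :=
        mul_nonneg (le_of_lt (mul_pos h2t h1t)) (Real.rpow_nonneg (by linarith) _)
      have tlog := term_log_le (C := (2 ^ (2*θ:ℝ) * (1-θ)⁻¹) * ((Real.log 2)⁻¹ + 1))
        (e := -θ) (w := rateExp 1 θ) hb
        (by
          have p4 : (0:ℝ) < (Real.log 2)⁻¹ := inv_pos.mpr hl2
          have p2 := mul_pos h2t h1t
          nlinarith) he2
      have hB2 : (2 ^ (2*θ:ℝ) * (1-θ)⁻¹) * b ^ (-θ) * (1 + Real.log b)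
          ≤ ((2 ^ (2*θ:ℝ) * (1-θ)⁻¹) * ((Real.log 2)⁻¹ + 1)) * b ^ (-θ) * Real.log b := by
        calc (2 ^ (2*θ:ℝ) * (1-θ)⁻¹) * b ^ (-θ) * (1 + Real.log b)
            ≤ (2 ^ (2*θ:ℝ) * (1-θ)⁻¹) * b ^ (-θ) * (((Real.log 2)⁻¹ + 1) * Real.log b) :=
              mul_le_mul_of_nonneg_left (one_add_log_le hb) hBn
          _ = ((2 ^ (2*θ:ℝ) * (1-θ)⁻¹) * ((Real.log 2)⁻¹ + 1)) * b ^ (-θ) * Real.log b := by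
              ring
      calc (∫ u in Set.Icc (1 : ℝ) b,
              u ^ (-(2 * θ)) / (1 + (b ^ (1 - θ) - u ^ (1 - θ)) ^ (1:ℝ)))
          ≤ _ := hM
        _ ≤ ((1 - 2 ^ (θ-1:ℝ)) ^ (-(1:ℝ)) / (2*θ-1)) * b ^ (-(1*(1-θ)))
            + (2 ^ (2*θ:ℝ) * (1-θ)⁻¹) * b ^ (-θ) * (1 + Real.log b) := add_le_add hA hB
        _ ≤ ((1 - 2 ^ (θ-1:ℝ)) ^ (-(1:ℝ)) / (2*θ-1)) * b ^ rateExp 1 θ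
            + ((2 ^ (2*θ:ℝ) * (1-θ)⁻¹) * ((Real.log 2)⁻¹ + 1)) * b ^ (-θ) * Real.log b :=
            add_le_add t1 hB2
        _ ≤ ((1 - 2 ^ (θ-1:ℝ)) ^ (-(1:ℝ)) / (2*θ-1)) * b ^ rateExp 1 θ
            + ((2 ^ (2*θ:ℝ) * (1-θ)⁻¹) * ((Real.log 2)⁻¹ + 1)) * (rateExp 1 θ - -θ)⁻¹
              * b ^ rateExp 1 θ := add_le_add le_rfl tlog
        _ = ((1 - 2 ^ (θ-1:ℝ)) ^ (-(1:ℝ)) / (2*θ-1)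
            + ((2 ^ (2*θ:ℝ) * (1-θ)⁻¹) * ((Real.log 2)⁻¹ + 1)) * (rateExp 1 θ - -θ)⁻¹)
              * b ^ rateExp 1 θ := by ring
  · -- ν > 1
    have hhalf : (1:ℝ)/2 ≤ ν/(ν+1) := by
      rw [le_div_iff₀ (by linarith : (0:ℝ) < ν+1)]; linarith
    have hnot : (ν,θ) ∉ logSet := by
      rintro (⟨_,h,_⟩|⟨h,_,_⟩) <;> simp at h <;> linarith
    have hC2 : (0:ℝ) < 2 ^ (2*θ:ℝ) * (1-θ)⁻¹ * (1 + (ν-1)⁻¹) :=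
      mul_pos (mul_pos h2t h1t) (by
        have : (0:ℝ) < (ν-1)⁻¹ := inv_pos.mpr (by linarith)
        linarith)
    rcases lt_trichotomy θ (1/2) with hθ2 | hθ2 | hθ2
    · -- case 7 : ν > 1, θ < 1/2
      have hrate : rateExp ν θ = -θ := by
        rw [rateExp, if_neg (fun h => by linarith [h.1]), if_pos ⟨hν1.le, by linarith⟩]
      refine ⟨(1 - 2 ^ (θ-1:ℝ)) ^ (-ν) / (1-2*θ) + 2 ^ (2*θ:ℝ) * (1-θ)⁻¹ * (1 + (ν-1)⁻¹),
        by
          have p1 := div_pos hCA (by linarith : (0:ℝ) < 1-2*θ)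
          linarith,
        fun b hb => ⟨fun hmem => (hnot hmem).elim, fun _ => ?_⟩⟩
      have hM := master hθ hθ1 hν hb
      have hA := Apart_lt hθ hθ2 hν hb
      have hB := Bpart_gt hθ hθ1 hν1 hb
      have he1 : 1-2*θ-ν*(1-θ) ≤ rateExp ν θ := by
        rw [hrate]
        nlinarith [mul_nonneg (by linarith : (0:ℝ) ≤ 1-θ) (by linarith : (0:ℝ) ≤ ν-1)]
      have he2 : -θ ≤ rateExp ν θ := le_of_eq hrate.symm
      have t1 := term_le (C := (1 - 2 ^ (θ-1:ℝ)) ^ (-ν) / (1-2*θ)) hb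
        (le_of_lt (div_pos hCA (by linarith : (0:ℝ) < 1-2*θ))) he1
      have t2 := term_le (C := 2 ^ (2*θ:ℝ) * (1-θ)⁻¹ * (1 + (ν-1)⁻¹)) hb hC2.le he2
      calc (∫ u in Set.Icc (1 : ℝ) b,
              u ^ (-(2 * θ)) / (1 + (b ^ (1 - θ) - u ^ (1 - θ)) ^ ν))
          ≤ _ := hM
        _ ≤ ((1 - 2 ^ (θ-1:ℝ)) ^ (-ν) / (1-2*θ)) * b ^ (1-2*θ-ν*(1-θ))
            + (2 ^ (2*θ:ℝ) * (1-θ)⁻¹ * (1 + (ν-1)⁻¹)) * b ^ (-θ) := add_le_add hA hB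
        _ ≤ ((1 - 2 ^ (θ-1:ℝ)) ^ (-ν) / (1-2*θ)) * b ^ rateExp ν θ
            + (2 ^ (2*θ:ℝ) * (1-θ)⁻¹ * (1 + (ν-1)⁻¹)) * b ^ rateExp ν θ :=
            add_le_add t1 t2
        _ = ((1 - 2 ^ (θ-1:ℝ)) ^ (-ν) / (1-2*θ)
            + 2 ^ (2*θ:ℝ) * (1-θ)⁻¹ * (1 + (ν-1)⁻¹)) * b ^ rateExp ν θ := by ring
    · -- case 8 : ν > 1, θ = 1/2
      subst hθ2
      have hrate : rateExp ν (1/2) = -(1/2:ℝ) := by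
        rw [rateExp, if_neg (fun h => by linarith [h.1]), if_pos ⟨hν1.le, hhalf⟩]
      have heA : -(ν*(1-(1/2:ℝ))) < rateExp ν (1/2) := by rw [hrate]; linarith
      refine ⟨(1 - 2 ^ ((1/2:ℝ)-1)) ^ (-ν)
          * (rateExp ν (1/2) - -(ν*(1-(1/2:ℝ))))⁻¹
        + 2 ^ (2*(1/2:ℝ)) * (1-(1/2:ℝ))⁻¹ * (1 + (ν-1)⁻¹),
        by
          have p1 := mul_pos hCA (inv_pos.mpr (by linarith : (0:ℝ) < rateExp ν (1/2) - -(ν*(1-(1/2:ℝ)))))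
          linarith,
        fun b hb => ⟨fun hmem => (hnot hmem).elim, fun _ => ?_⟩⟩
      have hM := master hθ hθ1 hν hb
      have hAeq := Apart_eq hν hb (b := b)
      rw [hAeq] at hM
      have hB := Bpart_gt (θ := (1/2:ℝ)) (by norm_num) (by norm_num) hν1 hb
      have tlogA := term_log_le (C := (1 - 2 ^ ((1/2:ℝ)-1)) ^ (-ν))
        (e := -(ν*(1-(1/2:ℝ)))) (w := rateExp ν (1/2)) hb hCA.le heA
      have he2 : -(1/2:ℝ) ≤ rateExp ν (1/2) := le_of_eq hrate.symm
      have t2 := term_le (C := 2 ^ (2*(1/2:ℝ)) * (1-(1/2:ℝ))⁻¹ * (1 + (ν-1)⁻¹)) hb hC2.le he2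
      calc (∫ u in Set.Icc (1 : ℝ) b,
              u ^ (-(2 * (1/2:ℝ))) / (1 + (b ^ (1 - (1/2:ℝ)) - u ^ (1 - (1/2:ℝ))) ^ ν))
          ≤ _ := hM
        _ ≤ (1 - 2 ^ ((1/2:ℝ)-1)) ^ (-ν) * b ^ (-(ν*(1-(1/2:ℝ)))) * Real.log b
            + (2 ^ (2*(1/2:ℝ)) * (1-(1/2:ℝ))⁻¹ * (1 + (ν-1)⁻¹)) * b ^ (-(1/2:ℝ)) :=
            add_le_add le_rfl hB
        _ ≤ ((1 - 2 ^ ((1/2:ℝ)-1)) ^ (-ν) * (rateExp ν (1/2) - -(ν*(1-(1/2:ℝ))))⁻¹)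
              * b ^ rateExp ν (1/2)
            + (2 ^ (2*(1/2:ℝ)) * (1-(1/2:ℝ))⁻¹ * (1 + (ν-1)⁻¹)) * b ^ rateExp ν (1/2) :=
            add_le_add tlogA t2
        _ = ((1 - 2 ^ ((1/2:ℝ)-1)) ^ (-ν) * (rateExp ν (1/2) - -(ν*(1-(1/2:ℝ))))⁻¹
            + 2 ^ (2*(1/2:ℝ)) * (1-(1/2:ℝ))⁻¹ * (1 + (ν-1)⁻¹)) * b ^ rateExp ν (1/2) := by
            ring
    · -- case 9 : ν > 1, θ > 1/2
      have hω : -(ν*(1-θ)) ≤ rateExp ν θ ∧ -θ ≤ rateExp ν θ := by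
        rw [rateExp, if_neg (fun h => by linarith [h.1])]
        by_cases h : θ ≤ ν/(ν+1)
        · rw [if_pos ⟨hν1.le, h⟩]
          have h' := (le_div_iff₀ (by linarith : (0:ℝ) < ν+1)).mp h
          constructor <;> nlinarith
        · rw [if_neg (fun hh => h hh.2)]
          have h' := (div_le_iff₀ (by linarith : (0:ℝ) < ν+1)).mp (le_of_not_ge h)
          constructor <;> nlinarith
      refine ⟨(1 - 2 ^ (θ-1:ℝ)) ^ (-ν) / (2*θ-1) + 2 ^ (2*θ:ℝ) * (1-θ)⁻¹ * (1 + (ν-1)⁻¹),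
        by
          have p1 := div_pos hCA (by linarith : (0:ℝ) < 2*θ-1)
          linarith,
        fun b hb => ⟨fun hmem => (hnot hmem).elim, fun _ => ?_⟩⟩
      have hM := master hθ hθ1 hν hb
      have hA := Apart_gt hθ2 hθ1 hν hb
      have hB := Bpart_gt hθ hθ1 hν1 hb
      have t1 := term_le (C := (1 - 2 ^ (θ-1:ℝ)) ^ (-ν) / (2*θ-1)) hb
        (le_of_lt (div_pos hCA (by linarith : (0:ℝ) < 2*θ-1))) hω.1
      have t2 := term_le (C := 2 ^ (2*θ:ℝ) * (1-θ)⁻¹ * (1 + (ν-1)⁻¹)) hb hC2.le hω.2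
      calc (∫ u in Set.Icc (1 : ℝ) b,
              u ^ (-(2 * θ)) / (1 + (b ^ (1 - θ) - u ^ (1 - θ)) ^ ν))
          ≤ _ := hM
        _ ≤ ((1 - 2 ^ (θ-1:ℝ)) ^ (-ν) / (2*θ-1)) * b ^ (-(ν*(1-θ)))
            + (2 ^ (2*θ:ℝ) * (1-θ)⁻¹ * (1 + (ν-1)⁻¹)) * b ^ (-θ) := add_le_add hA hB
        _ ≤ ((1 - 2 ^ (θ-1:ℝ)) ^ (-ν) / (2*θ-1)) * b ^ rateExp ν θ
            + (2 ^ (2*θ:ℝ) * (1-θ)⁻¹ * (1 + (ν-1)⁻¹)) * b ^ rateExp ν θ :=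
            add_le_add t1 t2
        _ = ((1 - 2 ^ (θ-1:ℝ)) ^ (-ν) / (2*θ-1)
            + 2 ^ (2*θ:ℝ) * (1-θ)⁻¹ * (1 + (ν-1)⁻¹)) * b ^ rateExp ν θ := by ring
end

section
/- Let 0 < s < 1 and define λ_i = i^{-1/s} for i ≥ 1, so that (λ_i) is non-increasing and Σ_{i=1}^∞ λ_i < ∞. Then Σ_{i=1}^∞ λ_i^{s} = ∞, and nevertheless for every λ > 0 one has N(λ) = Σ_{i=1}^∞ 1/(1 + λ·i^{1/s}) ≤ λ^{-s} · ∫₀^∞ (1 + u^{1/s})^{-1} du, where ∫₀^∞ (1 + u^{1/s})^{-1} du < ∞; in particular N(λ) = O(λ^{-s}) as λ ↓ 0 while Tr(L^s) = ∞. -/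
open Real MeasureTheory Set

lemma intOn (s : ℝ) (hs : 0 < s) (hs1 : s < 1) {c : ℝ} (hc : 0 < c) :
    IntegrableOn (fun u : ℝ => (1 + c * u ^ (1 / s))⁻¹) (Set.Ioi 0) := by
  have hmeas : Measurable (fun u : ℝ => (1 + c * u ^ (1 / s))⁻¹) := by
    have hcont : Continuous fun u : ℝ => u ^ (1 / s) := by
      rw [continuous_iff_continuousAt]
      intro x
      exact Real.continuousAt_rpow_const x (1 / s) (Or.inr (by positivity))
    exact ((continuous_const.add (continuous_const.mul hcont)).measurable).inv
  have h1s : (1:ℝ) < 1 / s := one_lt_one_div hs hs1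
  have hpos : ∀ u : ℝ, 0 ≤ u → (0:ℝ) < 1 + c * u ^ (1 / s) := by
    intro u hu
    have : 0 ≤ c * u ^ (1 / s) := mul_nonneg hc.le (rpow_nonneg hu _)
    linarith
  have hIoc : IntegrableOn (fun u : ℝ => (1 + c * u ^ (1 / s))⁻¹) (Set.Ioc 0 1) := by
    apply Measure.integrableOn_of_bounded (M := 1)
    · simp
    · exact hmeas.aestronglyMeasurable
    · filter_upwards [ae_restrict_mem measurableSet_Ioc] with u hu
      rw [Real.norm_eq_abs, abs_of_pos (inv_pos.2 (hpos u hu.1.le))]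
      rw [inv_le_one_iff₀]
      right
      have : 0 ≤ c * u ^ (1 / s) := mul_nonneg hc.le (rpow_nonneg hu.1.le _)
      linarith
  have hIoi : IntegrableOn (fun u : ℝ => (1 + c * u ^ (1 / s))⁻¹) (Set.Ioi 1) := by
    have hint : IntegrableOn (fun u : ℝ => c⁻¹ * u ^ (-(1/s))) (Set.Ioi 1) :=
      (integrableOn_Ioi_rpow_of_lt (by linarith) one_pos).const_mul _
    refine hint.mono' hmeas.aestronglyMeasurable ?_
    filter_upwards [ae_restrict_mem measurableSet_Ioi] with u hu
    have hu0 : (0:ℝ) < u := lt_trans one_pos hu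
    rw [Real.norm_eq_abs, abs_of_pos (inv_pos.2 (hpos u hu0.le))]
    have hru : (0:ℝ) < u ^ (1/s) := rpow_pos_of_pos hu0 _
    rw [Real.rpow_neg hu0.le, ← mul_inv]
    apply inv_anti₀ (by positivity)
    linarith
  have : Set.Ioi (0:ℝ) = Set.Ioc 0 1 ∪ Set.Ioi 1 := by
    rw [Set.Ioc_union_Ioi_eq_Ioi]; norm_num
  rw [this]
  exact hIoc.union hIoi

/-- For `0 < s < 1` let `λ_i = i^{-1/s}` for `i ≥ 1` (here `lam i` denotes
`λ_{i+1}`, i.e. `((i:ℝ)+1)^{-1/s}`). The sequence is non-increasing and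
summable, `Σ λ_i^s = ∞`, yet the effective dimension satisfies
`N(λ) = Σ 1/(1 + λ·i^{1/s}) ≤ λ^{-s}·∫₀^∞ (1+u^{1/s})⁻¹ du` for every `λ > 0`,
the integral being finite. -/
theorem stmt17 (s : ℝ) (hs : 0 < s) (hs1 : s < 1) :
    (∀ i j : ℕ, i ≤ j →
        ((j : ℝ) + 1) ^ (-(1 / s)) ≤ ((i : ℝ) + 1) ^ (-(1 / s))) ∧
      Summable (fun i : ℕ => ((i : ℝ) + 1) ^ (-(1 / s))) ∧
      ¬ Summable (fun i : ℕ => (((i : ℝ) + 1) ^ (-(1 / s))) ^ s) ∧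
      IntegrableOn (fun u : ℝ => (1 + u ^ (1 / s))⁻¹) (Set.Ioi 0) ∧
      ∀ l : ℝ, 0 < l →
        (∑' i : ℕ, (1 + l * ((i : ℝ) + 1) ^ (1 / s))⁻¹)
          ≤ l ^ (-s) * ∫ u in Set.Ioi (0 : ℝ), (1 + u ^ (1 / s))⁻¹ := by
  have h1s : (1:ℝ) < 1 / s := one_lt_one_div hs hs1
  refine ⟨?_, ?_, ?_, ?_, ?_⟩
  · intro i j hij
    apply Real.rpow_le_rpow_of_nonpos (by positivity)
    · exact_mod_cast by exact_mod_cast Nat.add_le_add_right hij 1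
    · linarith
  · have : Summable (fun i : ℕ => ((i + 1 : ℕ) : ℝ) ^ (-(1 / s))) := by
      exact (summable_nat_add_iff 1).2 (Real.summable_nat_rpow.2 (by linarith))
    convert this using 2 with i
    push_cast; ring_nf
  · intro h
    have heq : (fun i : ℕ => (((i : ℝ) + 1) ^ (-(1 / s))) ^ s)
        = fun i : ℕ => ((i : ℝ) + 1)⁻¹ := by
      funext i
      rw [← Real.rpow_mul (by positivity), neg_mul, one_div,
        inv_mul_cancel₀ hs.ne', Real.rpow_neg_one]
    rw [heq] at h
    have h2 : Summable (fun i : ℕ => ((i + 1 : ℕ) : ℝ)⁻¹) := by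
      convert h using 2 with i
      push_cast; ring_nf
    exact Real.not_summable_natCast_inv ((summable_nat_add_iff 1).1 h2)
  · have := intOn s hs hs1 (c := 1) one_pos
    simpa using this
  · intro l hl
    set f : ℝ → ℝ := fun t => (1 + l * t ^ (1 / s))⁻¹ with hf
    have hfnn : ∀ t : ℝ, 0 ≤ t → 0 ≤ f t := by
      intro t ht
      apply inv_nonneg.2
      have := mul_nonneg hl.le (rpow_nonneg ht (1/s)); linarith
    have hint : IntegrableOn f (Set.Ioi 0) := intOn s hs hs1 hl
    -- key: partial sums ≤ ∫ f on Ioi 0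
    have hsum : ∀ n : ℕ, (∑ i ∈ Finset.range n, (1 + l * ((i : ℝ) + 1) ^ (1 / s))⁻¹)
        ≤ ∫ u in Set.Ioi (0:ℝ), f u := by
      intro n
      have hanti : AntitoneOn f (Set.Icc (0:ℝ) (0 + n)) := by
        intro a ha b hb hab
        apply inv_anti₀
        · have := mul_nonneg hl.le (rpow_nonneg ha.1 (1/s)); linarith
        · have : a ^ (1/s) ≤ b ^ (1/s) := Real.rpow_le_rpow ha.1 hab (by positivity)
          nlinarith
      have h1 := hanti.sum_le_integral
      have h2 : (∫ x in (0:ℝ)..(0 + n), f x) ≤ ∫ u in Set.Ioi (0:ℝ), f u := by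
        rw [intervalIntegral.integral_of_le (by positivity)]
        apply setIntegral_mono_set hint
        · filter_upwards [ae_restrict_mem measurableSet_Ioi] with x hx
            using hfnn x (le_of_lt hx)
        · exact Filter.Eventually.of_forall (fun x hx => hx.1)
      calc (∑ i ∈ Finset.range n, (1 + l * ((i : ℝ) + 1) ^ (1 / s))⁻¹)
          = ∑ i ∈ Finset.range n, f (0 + (i + 1 : ℕ)) := by
            apply Finset.sum_congr rfl; intro i _; simp [hf]
        _ ≤ ∫ x in (0:ℝ)..(0 + n), f x := h1
        _ ≤ _ := h2
    have hts : (∑' i : ℕ, (1 + l * ((i : ℝ) + 1) ^ (1 / s))⁻¹) ≤ ∫ u in Set.Ioi (0:ℝ), f u :=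
      Real.tsum_le_of_sum_range_le (fun n => hfnn _ (by positivity)) hsum
    -- substitution
    have hsub : (∫ u in Set.Ioi (0:ℝ), f u)
        = l ^ (-s) * ∫ u in Set.Ioi (0:ℝ), (1 + u ^ (1 / s))⁻¹ := by
      have hb : (0:ℝ) < l ^ s := rpow_pos_of_pos hl s
      have := integral_comp_mul_left_Ioi (fun u : ℝ => (1 + u ^ (1/s))⁻¹) 0 hb
      rw [mul_zero] at this
      have heq : ∀ x ∈ Set.Ioi (0:ℝ),
          (fun x : ℝ => (1 + (l ^ s * x) ^ (1/s))⁻¹) x = f x := by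
        intro x hx
        simp only [hf]
        congr 2
        rw [Real.mul_rpow (by positivity) (le_of_lt hx),
          ← Real.rpow_mul hl.le, mul_one_div, div_self hs.ne', Real.rpow_one]
      rw [← setIntegral_congr_fun measurableSet_Ioi heq, this, smul_eq_mul,
        ← Real.rpow_neg hl.le]
    rw [← hsub]; exact hts
end

section
/- Let (Ω, 𝔉, ℙ) be a probability space, let H be a separable real Hilbert space, and let X : Ω → H be a strongly measurable random element with ‖X‖ ≤ 1 almost surely. Suppose there is a constant c ≥ 0 such that for every f ∈ H, E[⟨X, f⟩⁴] ≤ c·(E[⟨X, f⟩²])². Then for every compact bounded linear operator W : H → H, E[‖W X‖⁴] ≤ c·(E[‖W X‖²])². -/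
open MeasureTheory

set_option maxHeartbeats 1000000

/-- Let `X` be a strongly measurable random element of a separable real
Hilbert space `H` with `‖X‖ ≤ 1` a.s. If `E[⟨X,f⟩⁴] ≤ c·(E[⟨X,f⟩²])²`
for every `f ∈ H`, then `E[‖WX‖⁴] ≤ c·(E[‖WX‖²])²` for every compact
bounded linear operator `W : H → H`. -/
theorem stmt18 {Ω : Type*} [MeasurableSpace Ω] (μ : Measure Ω)
    [IsProbabilityMeasure μ]
    {H : Type*} [NormedAddCommGroup H] [InnerProductSpace ℝ H]
    [CompleteSpace H] [TopologicalSpace.SeparableSpace H]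
    (X : Ω → H) (hX : StronglyMeasurable X)
    (hbd : ∀ᵐ ω ∂μ, ‖X ω‖ ≤ 1)
    (c : ℝ) (hc : 0 ≤ c)
    (hmom : ∀ f : H,
      (∫ ω, (inner ℝ (X ω) f : ℝ) ^ 4 ∂μ)
        ≤ c * (∫ ω, (inner ℝ (X ω) f : ℝ) ^ 2 ∂μ) ^ 2) :
    ∀ W : H →L[ℝ] H, IsCompactOperator W →
      (∫ ω, ‖W (X ω)‖ ^ 4 ∂μ) ≤ c * (∫ ω, ‖W (X ω)‖ ^ 2 ∂μ) ^ 2 := by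
  intro W _hW
  classical
  obtain ⟨w, b, hbw⟩ := exists_hilbertBasis ℝ H
  have hw_on : Orthonormal ℝ ((↑) : w → H) := by rw [← hbw]; exact b.orthonormal
  haveI hcount : Countable w := by
    refine Pairwise.countable_of_isOpen_disjoint
      (s := fun i : w => Metric.ball (i : H) (1/2)) ?_ (fun i => Metric.isOpen_ball)
      (fun i => Metric.nonempty_ball.2 (by norm_num))
    intro i j hij
    refine Metric.ball_disjoint_ball ?_
    have hnormi : ‖(i : H)‖ = 1 := hw_on.1 i
    have hnormj : ‖(j : H)‖ = 1 := hw_on.1 j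
    have hinner : (inner ℝ (i : H) (j : H) : ℝ) = 0 := hw_on.2 hij
    have h2 : ‖(i : H) - (j : H)‖ ^ 2 = 2 := by
      rw [norm_sub_sq_real, hnormi, hnormj, hinner]; ring
    have h0 : (0:ℝ) ≤ ‖(i : H) - (j : H)‖ := norm_nonneg _
    have h1 : (1:ℝ) ≤ ‖(i : H) - (j : H)‖ := by nlinarith
    rw [dist_eq_norm]
    linarith
  set g : w → H := fun i => ContinuousLinearMap.adjoint W (b i) with hgdef
  set a : w → Ω → ℝ := fun i ω => (inner ℝ (X ω) (g i) : ℝ) ^ 2 with ha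
  have hinner_eq : ∀ (i : w) (x : H), (inner ℝ x (g i) : ℝ) = (inner ℝ (W x) (b i) : ℝ) := by
    intro i x
    calc (inner ℝ x (g i) : ℝ) = (inner ℝ (g i) x : ℝ) := real_inner_comm _ _
      _ = (inner ℝ (b i) (W x) : ℝ) := ContinuousLinearMap.adjoint_inner_left W x (b i)
      _ = (inner ℝ (W x) (b i) : ℝ) := real_inner_comm _ _
  -- Parseval
  have hsum : ∀ ω, HasSum (fun i => a i ω) (‖W (X ω)‖ ^ 2) := by
    intro ω
    have h := b.hasSum_inner_mul_inner (W (X ω)) (W (X ω))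
    rw [real_inner_self_eq_norm_sq] at h
    have he : (fun i => a i ω)
        = fun i => (inner ℝ (W (X ω)) (b i) : ℝ) * (inner ℝ (b i) (W (X ω)) : ℝ) := by
      funext i
      rw [ha]
      simp only
      rw [hinner_eq i (X ω), sq, real_inner_comm (W (X ω)) (b i)]
    rw [he]
    exact h
  have ha_nonneg : ∀ (i : w) ω, 0 ≤ a i ω := fun i ω => sq_nonneg _
  have hmeas : ∀ i : w, StronglyMeasurable (a i) := by
    intro i
    have hcont : Continuous fun x : H => (inner ℝ x (g i) : ℝ) ^ 2 :=
      (continuous_id.inner continuous_const).pow 2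
    exact hcont.comp_stronglyMeasurable hX
  have hbound : ∀ i : w, ∀ᵐ ω ∂μ, ‖a i ω‖ ≤ ‖g i‖ ^ 2 := by
    intro i
    filter_upwards [hbd] with ω hω
    have h1 : |(inner ℝ (X ω) (g i) : ℝ)| ≤ ‖X ω‖ * ‖g i‖ := abs_real_inner_le_norm _ _
    have h2 : |(inner ℝ (X ω) (g i) : ℝ)| ≤ ‖g i‖ := by nlinarith [norm_nonneg (g i), norm_nonneg (X ω), abs_nonneg (inner ℝ (X ω) (g i) : ℝ)]
    rw [Real.norm_eq_abs, abs_of_nonneg (ha_nonneg i ω), ha]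
    simp only
    rw [sq, sq]
    calc (inner ℝ (X ω) (g i) : ℝ) * (inner ℝ (X ω) (g i) : ℝ)
        = |(inner ℝ (X ω) (g i) : ℝ)| * |(inner ℝ (X ω) (g i) : ℝ)| := (abs_mul_abs_self _).symm
      _ ≤ ‖g i‖ * ‖g i‖ := by
          exact mul_le_mul h2 h2 (abs_nonneg _) (norm_nonneg _)
  have hint : ∀ i : w, Integrable (a i) μ := fun i =>
    ⟨(hmeas i).aestronglyMeasurable, HasFiniteIntegral.of_bounded (hbound i)⟩
  have hint_nonneg : ∀ i : w, 0 ≤ ∫ ω, a i ω ∂μ := fun i =>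
    integral_nonneg (fun ω => ha_nonneg i ω)
  have hL2 : ∀ i : w, MemLp (a i) (ENNReal.ofReal 2) μ := fun i =>
    (memLp_top_of_bound (hmeas i).aestronglyMeasurable _ (hbound i)).mono_exponent le_top
  -- fourth moment hypothesis in terms of `a`
  have hmom2 : ∀ i : w, (∫ ω, a i ω ^ 2 ∂μ) ≤ c * (∫ ω, a i ω ∂μ) ^ 2 := by
    intro i
    have h := hmom (g i)
    have e4 : ∀ ω, (inner ℝ (X ω) (g i) : ℝ) ^ 4 = a i ω ^ 2 := fun ω => by rw [ha]; ring
    have e2 : ∀ ω, (inner ℝ (X ω) (g i) : ℝ) ^ 2 = a i ω := fun ω => by rw [ha]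
    simp only [e4, e2] at h
    exact h
  clear ha hgdef hinner_eq hmom hbw hw_on
  clear_value a g
  -- Cauchy-Schwarz
  have hCS : ∀ i j : w, (∫ ω, a i ω * a j ω ∂μ) ≤
      Real.sqrt (∫ ω, a i ω ^ 2 ∂μ) * Real.sqrt (∫ ω, a j ω ^ 2 ∂μ) := by
    intro i j
    have h22 : (2:ℝ).HolderConjugate 2 := Real.HolderConjugate.two_two
    have h := integral_mul_le_Lp_mul_Lq_of_nonneg h22
      (Filter.Eventually.of_forall (ha_nonneg i)) (Filter.Eventually.of_forall (ha_nonneg j))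
      (hL2 i) (hL2 j)
    have e : ∀ (k : w) ω, a k ω ^ (2:ℝ) = a k ω ^ 2 := fun k ω => by
      rw [← Real.rpow_natCast (a k ω) 2]; norm_num
    simp only [e] at h
    rw [Real.sqrt_eq_rpow, Real.sqrt_eq_rpow]
    exact h
  have hsqrt : ∀ i : w, Real.sqrt (∫ ω, a i ω ^ 2 ∂μ) ≤ Real.sqrt c * ∫ ω, a i ω ∂μ := by
    intro i
    have h1 : (∫ ω, a i ω ^ 2 ∂μ) ≤ (Real.sqrt c * ∫ ω, a i ω ∂μ) ^ 2 := by
      have he : (Real.sqrt c * ∫ ω, a i ω ∂μ) ^ 2 = c * (∫ ω, a i ω ∂μ) ^ 2 := by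
        rw [mul_pow, Real.sq_sqrt hc]
      rw [he]; exact hmom2 i
    have h2 := Real.sqrt_le_sqrt h1
    rwa [Real.sqrt_sq (mul_nonneg (Real.sqrt_nonneg c) (hint_nonneg i))] at h2
  have hpair : ∀ p : w × w, (∫ ω, a p.1 ω * a p.2 ω ∂μ) ≤
      c * ((∫ ω, a p.1 ω ∂μ) * (∫ ω, a p.2 ω ∂μ)) := by
    intro p
    calc (∫ ω, a p.1 ω * a p.2 ω ∂μ)
        ≤ Real.sqrt (∫ ω, a p.1 ω ^ 2 ∂μ) * Real.sqrt (∫ ω, a p.2 ω ^ 2 ∂μ) := hCS p.1 p.2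
      _ ≤ (Real.sqrt c * ∫ ω, a p.1 ω ∂μ) * (Real.sqrt c * ∫ ω, a p.2 ω ∂μ) :=
          mul_le_mul (hsqrt p.1) (hsqrt p.2) (Real.sqrt_nonneg _)
            (mul_nonneg (Real.sqrt_nonneg c) (hint_nonneg _))
      _ = (Real.sqrt c * Real.sqrt c) * ((∫ ω, a p.1 ω ∂μ) * (∫ ω, a p.2 ω ∂μ)) := by ring
      _ = c * ((∫ ω, a p.1 ω ∂μ) * (∫ ω, a p.2 ω ∂μ)) := by rw [Real.mul_self_sqrt hc]
  -- a.e. bound on ‖W X‖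
  have hWb : ∀ᵐ ω ∂μ, ‖W (X ω)‖ ≤ ‖W‖ := by
    filter_upwards [hbd] with ω hω
    calc ‖W (X ω)‖ ≤ ‖W‖ * ‖X ω‖ := W.le_opNorm _
      _ ≤ ‖W‖ := mul_le_of_le_one_right (norm_nonneg W) hω
  -- ENNReal-valued summability conditions
  have hcoe : ∀ (i : w) ω, (‖a i ω‖₊ : ENNReal) = ENNReal.ofReal (a i ω) := by
    intro i ω
    rw [← enorm_eq_nnnorm, ← ofReal_norm, Real.norm_eq_abs, abs_of_nonneg (ha_nonneg i ω)]
  have haem : ∀ i : w, AEMeasurable (fun ω => (‖a i ω‖₊ : ENNReal)) μ := fun i =>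
    ((hmeas i).measurable.nnnorm.coe_nnreal_ennreal).aemeasurable
  have hlin1 : (∑' i : w, ∫⁻ ω, (‖a i ω‖₊ : ENNReal) ∂μ) ≠ ⊤ := by
    rw [← lintegral_tsum haem]
    have hpt : ∀ᵐ ω ∂μ, (∑' i : w, (‖a i ω‖₊ : ENNReal)) ≤ ENNReal.ofReal (‖W‖ ^ 2) := by
      filter_upwards [hWb] with ω hω
      have h1 : (∑' i : w, (‖a i ω‖₊ : ENNReal)) = ENNReal.ofReal (‖W (X ω)‖ ^ 2) := by
        rw [← (hsum ω).tsum_eq,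
          ENNReal.ofReal_tsum_of_nonneg (fun i => ha_nonneg i ω) (hsum ω).summable]
        exact tsum_congr fun i => hcoe i ω
      rw [h1]
      exact ENNReal.ofReal_le_ofReal (by nlinarith [norm_nonneg (W (X ω))])
    have h2 := lintegral_mono_ae hpt
    rw [lintegral_const, measure_univ, mul_one] at h2
    exact ne_top_of_le_ne_top ENNReal.ofReal_ne_top h2
  have hprod : ∀ ω, Summable fun p : w × w => a p.1 ω * a p.2 ω := fun ω =>
    Summable.mul_of_nonneg (hsum ω).summable (hsum ω).summable
      (fun i => ha_nonneg i ω) (fun i => ha_nonneg i ω)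
  have hmeas2 : ∀ p : w × w, AEStronglyMeasurable (fun ω => a p.1 ω * a p.2 ω) μ := fun p =>
    ((hmeas p.1).mul (hmeas p.2)).aestronglyMeasurable
  have hlin2 : (∑' p : w × w, ∫⁻ ω, (‖a p.1 ω * a p.2 ω‖₊ : ENNReal) ∂μ) ≠ ⊤ := by
    have heq := lintegral_tsum (μ := μ)
      (f := fun (p : w × w) ω => (‖a p.1 ω * a p.2 ω‖₊ : ENNReal)) (fun p =>
      (((hmeas p.1).mul (hmeas p.2)).measurable.nnnorm.coe_nnreal_ennreal).aemeasurable)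
    rw [← heq]
    have hpt : ∀ᵐ ω ∂μ, (∑' p : w × w, (‖a p.1 ω * a p.2 ω‖₊ : ENNReal))
        ≤ ENNReal.ofReal ((‖W‖ ^ 2) ^ 2) := by
      filter_upwards [hWb] with ω hω
      have h1 : (∑' p : w × w, (‖a p.1 ω * a p.2 ω‖₊ : ENNReal))
          = ENNReal.ofReal ((‖W (X ω)‖ ^ 2) ^ 2) := by
        have htv : (∑' p : w × w, a p.1 ω * a p.2 ω) = ‖W (X ω)‖ ^ 2 * ‖W (X ω)‖ ^ 2 :=
          ((hsum ω).mul (hsum ω) (hprod ω)).tsum_eq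
        rw [pow_two (‖W (X ω)‖ ^ 2), ← htv,
          ENNReal.ofReal_tsum_of_nonneg
            (fun p : w × w => mul_nonneg (ha_nonneg p.1 ω) (ha_nonneg p.2 ω)) (hprod ω)]
        refine tsum_congr fun p => ?_
        rw [← enorm_eq_nnnorm, ← ofReal_norm, Real.norm_eq_abs,
          abs_of_nonneg (mul_nonneg (ha_nonneg p.1 ω) (ha_nonneg p.2 ω))]
      rw [h1]
      refine ENNReal.ofReal_le_ofReal ?_
      exact pow_le_pow_left₀ (sq_nonneg _) (pow_le_pow_left₀ (norm_nonneg _) hω 2) 2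
    have h2 := lintegral_mono_ae hpt
    rw [lintegral_const, measure_univ, mul_one] at h2
    exact ne_top_of_le_ne_top ENNReal.ofReal_ne_top h2
  -- summability of the integrals
  have hsummInt : Summable fun i : w => ∫ ω, a i ω ∂μ := by
    refine (ENNReal.summable_toReal hlin1).congr fun i => ?_
    rw [integral_eq_lintegral_of_nonneg_ae (Filter.Eventually.of_forall (ha_nonneg i))
      (hmeas i).aestronglyMeasurable]
    congr 1
    exact lintegral_congr fun ω => hcoe i ω
  have hIsum : (∫ ω, ‖W (X ω)‖ ^ 2 ∂μ) = ∑' i : w, ∫ ω, a i ω ∂μ := by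
    rw [← integral_tsum (fun i => (hmeas i).aestronglyMeasurable) hlin1]
    exact integral_congr_ae (Filter.Eventually.of_forall fun ω => ((hsum ω).tsum_eq).symm)
  have hprodInt : Summable fun p : w × w => (∫ ω, a p.1 ω ∂μ) * (∫ ω, a p.2 ω ∂μ) :=
    hsummInt.mul_of_nonneg hsummInt (fun i => hint_nonneg i) (fun i => hint_nonneg i)
  have hRS : Summable fun p : w × w => c * ((∫ ω, a p.1 ω ∂μ) * (∫ ω, a p.2 ω ∂μ)) :=
    hprodInt.mul_left c
  have hLS : Summable fun p : w × w => ∫ ω, a p.1 ω * a p.2 ω ∂μ :=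
    Summable.of_nonneg_of_le
      (fun p => integral_nonneg fun ω => mul_nonneg (ha_nonneg p.1 ω) (ha_nonneg p.2 ω))
      hpair hRS
  calc (∫ ω, ‖W (X ω)‖ ^ 4 ∂μ)
      = ∫ ω, ∑' p : w × w, a p.1 ω * a p.2 ω ∂μ := by
        refine integral_congr_ae (Filter.Eventually.of_forall fun ω => ?_)
        show ‖W (X ω)‖ ^ 4 = ∑' p : w × w, a p.1 ω * a p.2 ω
        rw [((hsum ω).mul (hsum ω) (hprod ω)).tsum_eq]
        ring
    _ = ∑' p : w × w, ∫ ω, a p.1 ω * a p.2 ω ∂μ := integral_tsum hmeas2 hlin2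
    _ ≤ ∑' p : w × w, c * ((∫ ω, a p.1 ω ∂μ) * (∫ ω, a p.2 ω ∂μ)) := Summable.tsum_le_tsum hpair hLS hRS
    _ = c * ((∑' i : w, ∫ ω, a i ω ∂μ) * (∑' i : w, ∫ ω, a i ω ∂μ)) := by
        rw [tsum_mul_left, Summable.tsum_mul_tsum hsummInt hsummInt hprodInt]
    _ = c * (∫ ω, ‖W (X ω)‖ ^ 2 ∂μ) ^ 2 := by rw [hIsum]; ring
end
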